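/- arXiv:1902.09182 — 8 statements merged into one kernel-verified Lean document; each statement's English description precedes it below -/
import Mathlib

section
/- Let i : A → B be a graph map such that there exist a ∈ V(A) and b ∈ V(B) ∖ i(V(A)) with i(a)b ∈ E(B) (this holds whenever i is not an isomorphism and B is not the disjoint union of i(A) and B − i(A)). Then for every n ≥ 1 there is no graph map r : B × I_n → (A×I_n) ⊔_i B with r ∘ j equal to the identity of (A×I_n) ⊔_i B. -/
/-- A graph: vertex type `V` with a symmetric adjacency relation; loops are allowed. -/
structure LoopGraph (V : Type) : Type where
  adj : V → V → Prop
  symm : ∀ {x y : V}, adj x y → adj y x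

/-- A graph map: a vertex function preserving edges. -/
def IsGraphHom {V W : Type} (G : LoopGraph V) (H : LoopGraph W) (f : V → W) : Prop :=
  ∀ ⦃x y : V⦄, G.adj x y → H.adj (f x) (f y)

/-- The categorical product of graphs. -/
def LoopGraph.prod {V W : Type} (G : LoopGraph V) (H : LoopGraph W) : LoopGraph (V × W) where
  adj p q := G.adj p.1 q.1 ∧ H.adj p.2 q.2
  symm h := ⟨G.symm h.1, H.symm h.2⟩

/-- The graph `I_n` on vertices `{0,…,n}` with `i ~ j` iff `|i-j| ≤ 1` (all vertices looped). -/
def pathI (n : ℕ) : LoopGraph (Fin (n + 1)) where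
  adj i j := (i : ℕ) ≤ (j : ℕ) + 1 ∧ (j : ℕ) ≤ (i : ℕ) + 1
  symm h := ⟨h.2, h.1⟩

/-- `f` and `g` are ×-homotopic. -/
def Homotopic {V W : Type} (G : LoopGraph V) (H : LoopGraph W) (f g : V → W) : Prop :=
  ∃ (n : ℕ) (F : V × Fin (n + 1) → W),
    IsGraphHom (G.prod (pathI n)) H F ∧ (∀ a, F (a, 0) = f a) ∧ (∀ a, F (a, Fin.last n) = g a)

/-- `f` is a ×-homotopy equivalence. -/
def IsHtpyEquiv {V W : Type} (G : LoopGraph V) (H : LoopGraph W) (f : V → W) : Prop :=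
  IsGraphHom G H f ∧ ∃ g : W → V, IsGraphHom H G g ∧
    Homotopic G G (g ∘ f) id ∧ Homotopic H H (f ∘ g) id

/-- A graph is connected if any two vertices are joined by a path of edges. -/
def LoopGraph.Connected {V : Type} (G : LoopGraph V) : Prop :=
  ∀ x y : V, Relation.ReflTransGen G.adj x y

/-- `i : A → B` is an unfold: an induced-subgraph inclusion adding exactly one new vertex `v`
with `N(v) ⊆ N(i v')` for some vertex `v'` of `A`. -/
def IsUnfold {A B : Type} (GA : LoopGraph A) (GB : LoopGraph B) (i : A → B) : Prop :=
  Function.Injective i ∧ (∀ x y : A, GA.adj x y ↔ GB.adj (i x) (i y)) ∧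
  ∃ v : B, v ∉ Set.range i ∧ (∀ b : B, b ∉ Set.range i → b = v) ∧
    ∃ v' : A, ∀ b : B, GB.adj v b → GB.adj (i v') b

/-- Relation generating the pushout of `i : A → B` along `f : A → C`. -/
def pushoutRel {A B C : Type} (i : A → B) (f : A → C) : B ⊕ C → B ⊕ C → Prop :=
  fun x y => ∃ a : A, x = Sum.inl (i a) ∧ y = Sum.inr (f a)

/-- Vertex set of the pushout. -/
def Pushout {A B C : Type} (i : A → B) (f : A → C) : Type :=
  Quot (pushoutRel i f)

/-- Adjacency on a disjoint union. -/
def sumAdj {B C : Type} (GB : LoopGraph B) (GC : LoopGraph C) (x y : B ⊕ C) : Prop :=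
  (∃ b b', x = Sum.inl b ∧ y = Sum.inl b' ∧ GB.adj b b') ∨
  (∃ c c', x = Sum.inr c ∧ y = Sum.inr c' ∧ GC.adj c c')

/-- The pushout graph of `i : A → B` along `f : A → C`: classes are adjacent iff some
representatives are adjacent in `B` or in `C`. -/
def pushoutGraph {A B C : Type} (GB : LoopGraph B) (GC : LoopGraph C) (i : A → B) (f : A → C) :
    LoopGraph (Pushout i f) where
  adj x y := ∃ u v : B ⊕ C,
    Quot.mk (pushoutRel i f) u = x ∧ Quot.mk (pushoutRel i f) v = y ∧ sumAdj GB GC u v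
  symm := by
    rintro x y ⟨u, v, hu, hv, h⟩
    refine ⟨v, u, hv, hu, ?_⟩
    rcases h with ⟨b, b', rfl, rfl, hbb⟩ | ⟨c, c', rfl, rfl, hcc⟩
    · exact Or.inl ⟨b', b, rfl, rfl, GB.symm hbb⟩
    · exact Or.inr ⟨c', c, rfl, rfl, GC.symm hcc⟩

/-- The cobase change `C → B ⊔_A C` of `i` along `f`. -/
def cobase {A B C : Type} (i : A → B) (f : A → C) : C → Pushout i f :=
  fun c => Quot.mk (pushoutRel i f) (Sum.inr c)

/-- The map `a ↦ (a,0)` into the cylinder `A × I_n`. -/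
def cyl0 {A : Type} (n : ℕ) : A → A × Fin (n + 1) := fun a => (a, 0)

/-- The canonical map `(A × I_n) ⊔_i B → B × I_n`, induced by `(a,t) ↦ (i a, t)`, `b ↦ (b,0)`. -/
def cylJ {A B : Type} (i : A → B) (n : ℕ) : Pushout (cyl0 (A := A) n) i → B × Fin (n + 1) :=
  Quot.lift (Sum.elim (fun p => (i p.1, p.2)) (fun b => (b, (0 : Fin (n + 1)))))
    (by rintro x y ⟨a, rfl, rfl⟩; rfl)

/-- `i : A → B` has the homotopy extension property for homotopies of length `n`. -/
def HEP {A B : Type} (GA : LoopGraph A) (GB : LoopGraph B) (i : A → B) (n : ℕ) : Prop :=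
  ∀ (Z : Type) (GZ : LoopGraph Z) (f : A → Z) (g : B → Z),
    IsGraphHom GA GZ f → IsGraphHom GB GZ g → (∀ a, g (i a) = f a) →
    ∀ F : A × Fin (n + 1) → Z, IsGraphHom (GA.prod (pathI n)) GZ F → (∀ a, F (a, 0) = f a) →
    ∃ G : B × Fin (n + 1) → Z, IsGraphHom (GB.prod (pathI n)) GZ G ∧
      (∀ b, G (b, 0) = g b) ∧ (∀ a t, G (i a, t) = F (a, t))

/-- `FoldsTo G S`: the graph `G` can be reduced by a finite sequence of folds to the
induced subgraph on the vertex set `S`. -/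
inductive FoldsTo {V : Type} (G : LoopGraph V) : Set V → Prop
  | univ : FoldsTo G Set.univ
  | step {S : Set V} {v v' : V} : FoldsTo G S → v ∈ S → v' ∈ S → v ≠ v' →
      (∀ x ∈ S, G.adj v x → G.adj v' x) → FoldsTo G (S \ {v})

/-- `RelFoldsTo G A S`: `G` can be reduced to the induced subgraph on `S` by a finite
sequence of folds relative to `A` (never removing a vertex of `A`). -/
inductive RelFoldsTo {V : Type} (G : LoopGraph V) (A : Set V) : Set V → Prop
  | univ : RelFoldsTo G A Set.univ
  | step {S : Set V} {v v' : V} : RelFoldsTo G A S → v ∈ S → v ∉ A → v' ∈ S → v ≠ v' →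
      (∀ x ∈ S, G.adj v x → G.adj v' x) → RelFoldsTo G A (S \ {v})

/-- `p : X → Y` has the right lifting property with respect to every unfold. -/
def RLPunfolds {X Y : Type} (GX : LoopGraph X) (GY : LoopGraph Y) (p : X → Y) : Prop :=
  ∀ (A B : Type) (GA : LoopGraph A) (GB : LoopGraph B) (i : A → B), IsUnfold GA GB i →
    ∀ (f : A → X) (g : B → Y), IsGraphHom GA GX f → IsGraphHom GB GY g →
      (∀ a, p (f a) = g (i a)) →
      ∃ h : B → X, IsGraphHom GB GX h ∧ (∀ a, h (i a) = f a) ∧ ∀ b, p (h b) = g b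

/-- The graph `L_n`: the path `0 - 1 - ⋯ - n` with a loop at `0`. -/
def Lgraph (t : ℕ) : LoopGraph (Fin (t + 1)) where
  adj x y := ((x : ℕ) + 1 = (y : ℕ) ∨ (y : ℕ) + 1 = (x : ℕ)) ∨ ((x : ℕ) = 0 ∧ (y : ℕ) = 0)
  symm := by tauto

/-- The graph `I_0`: a single looped vertex. -/
def I0 : LoopGraph Unit where
  adj _ _ := True
  symm h := h

/-- The constant graph map `p_n : L_n → I_0`. -/
def pL (n : ℕ) : Fin (n + 1) → Unit := fun _ => ()

/-- An object of the category of finite graphs. -/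
structure FinGraph : Type where
  n : ℕ
  G : LoopGraph (Fin n)

/-- A class of morphisms in the category of finite graphs. -/
def MorClass : Type :=
  ∀ (A B : FinGraph), (Fin A.n → Fin B.n) → Prop

/-- `f : A → B` is a retract of `g : X → Y` in the arrow category. -/
def IsRetractOf (A B X Y : FinGraph) (f : Fin A.n → Fin B.n) (g : Fin X.n → Fin Y.n) : Prop :=
  ∃ (iA : Fin A.n → Fin X.n) (rA : Fin X.n → Fin A.n)
    (iB : Fin B.n → Fin Y.n) (rB : Fin Y.n → Fin B.n),
    IsGraphHom A.G X.G iA ∧ IsGraphHom X.G A.G rA ∧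
    IsGraphHom B.G Y.G iB ∧ IsGraphHom Y.G B.G rB ∧
    (∀ a, rA (iA a) = a) ∧ (∀ b, rB (iB b) = b) ∧
    (∀ a, g (iA a) = iB (f a)) ∧ (∀ x, f (rA x) = rB (g x))

/-- A class of morphisms is closed under retracts. -/
def RetractClosed (S : MorClass) : Prop :=
  ∀ (A B X Y : FinGraph) (f : Fin A.n → Fin B.n) (g : Fin X.n → Fin Y.n),
    IsGraphHom A.G B.G f → IsGraphHom X.G Y.G g →
    IsRetractOf A B X Y f g → S X Y g → S A B f

/-- `i` has the left lifting property with respect to `p` (in the category of finite graphs). -/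
def HasLift (A B X Y : FinGraph) (i : Fin A.n → Fin B.n) (p : Fin X.n → Fin Y.n) : Prop :=
  ∀ (f : Fin A.n → Fin X.n) (g : Fin B.n → Fin Y.n),
    IsGraphHom A.G X.G f → IsGraphHom B.G Y.G g → (∀ a, p (f a) = g (i a)) →
    ∃ h : Fin B.n → Fin X.n, IsGraphHom B.G X.G h ∧ (∀ a, h (i a) = f a) ∧ ∀ b, p (h b) = g b

/-- A model structure on the category of finite graphs: classes `W`, `Cof`, `Fib` of graph maps,
each closed under retracts, with two-out-of-three for `W`, the lifting axioms, and the two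
factorization axioms. -/
structure ModelStructure (W Cof Fib : MorClass) : Prop where
  w_hom : ∀ A B f, W A B f → IsGraphHom A.G B.G f
  c_hom : ∀ A B f, Cof A B f → IsGraphHom A.G B.G f
  f_hom : ∀ A B f, Fib A B f → IsGraphHom A.G B.G f
  w_retract : RetractClosed W
  c_retract : RetractClosed Cof
  f_retract : RetractClosed Fib
  two_of_three_comp : ∀ (A B D : FinGraph) (f : Fin A.n → Fin B.n) (g : Fin B.n → Fin D.n),
    IsGraphHom A.G B.G f → IsGraphHom B.G D.G g → W A B f → W B D g → W A D (g ∘ f)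
  two_of_three_right : ∀ (A B D : FinGraph) (f : Fin A.n → Fin B.n) (g : Fin B.n → Fin D.n),
    IsGraphHom A.G B.G f → IsGraphHom B.G D.G g → W A B f → W A D (g ∘ f) → W B D g
  two_of_three_left : ∀ (A B D : FinGraph) (f : Fin A.n → Fin B.n) (g : Fin B.n → Fin D.n),
    IsGraphHom A.G B.G f → IsGraphHom B.G D.G g → W B D g → W A D (g ∘ f) → W A B f
  lift_cw_f : ∀ (A B X Y : FinGraph) (i : Fin A.n → Fin B.n) (p : Fin X.n → Fin Y.n),
    Cof A B i → W A B i → Fib X Y p → HasLift A B X Y i p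
  lift_c_fw : ∀ (A B X Y : FinGraph) (i : Fin A.n → Fin B.n) (p : Fin X.n → Fin Y.n),
    Cof A B i → Fib X Y p → W X Y p → HasLift A B X Y i p
  fact_c_fw : ∀ (A B : FinGraph) (f : Fin A.n → Fin B.n), IsGraphHom A.G B.G f →
    ∃ (Z : FinGraph) (c : Fin A.n → Fin Z.n) (p : Fin Z.n → Fin B.n),
      Cof A Z c ∧ Fib Z B p ∧ W Z B p ∧ ∀ a, p (c a) = f a
  fact_cw_f : ∀ (A B : FinGraph) (f : Fin A.n → Fin B.n), IsGraphHom A.G B.G f →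
    ∃ (Z : FinGraph) (c : Fin A.n → Fin Z.n) (p : Fin Z.n → Fin B.n),
      Cof A Z c ∧ W A Z c ∧ Fib Z B p ∧ ∀ a, p (c a) = f a

/-- The class of ×-homotopy equivalences of finite graphs. -/
def Whe : MorClass := fun A B f => IsHtpyEquiv A.G B.G f

/-- if some vertex of `B` outside the image of `i` is adjacent to a vertex `i a`,
then for every `n ≥ 1` there is no retraction `r : B × I_n → (A × I_n) ⊔_i B` with `r ∘ j = id`. -/
theorem stmt1 {A B : Type} (GA : LoopGraph A) (GB : LoopGraph B) (i : A → B)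
    (hi : IsGraphHom GA GB i)
    (h : ∃ (a : A) (b : B), b ∉ Set.range i ∧ GB.adj (i a) b)
    (n : ℕ) (hn : 1 ≤ n) :
    ¬ ∃ r : B × Fin (n + 1) → Pushout (cyl0 (A := A) n) i,
        IsGraphHom (GB.prod (pathI n)) (pushoutGraph (GA.prod (pathI n)) GB (cyl0 n) i) r ∧
          ∀ x, r (cylJ i n x) = x := by
  rintro ⟨r, hr, hrj⟩
  obtain ⟨a, b, hb, hab⟩ := h
  have h1 : ((1 : Fin (n + 1)) : ℕ) = 1 := by
    simp only [Fin.val_one']; exact Nat.mod_eq_of_lt (by omega)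
  have hrb : r (b, 0) = Quot.mk _ (Sum.inr b) := hrj (Quot.mk _ (Sum.inr b))
  have hra : r (i a, 1) = Quot.mk _ (Sum.inl (a, (1 : Fin (n + 1)))) :=
    hrj (Quot.mk _ (Sum.inl (a, (1 : Fin (n + 1)))))
  have hedge : (GB.prod (pathI n)).adj (b, 0) (i a, 1) := by
    refine ⟨GB.symm hab, ?_, ?_⟩ <;> simp only [h1, Fin.val_zero] <;> omega
  have hadj := hr hedge
  rw [hrb, hra] at hadj
  obtain ⟨u, v, hu, hv, hadj⟩ := hadj
  have hju : cylJ i n (Quot.mk _ u) = (b, (0 : Fin (n + 1))) := by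
    rw [hu]; rfl
  have hjv : cylJ i n (Quot.mk _ v) = (i a, (1 : Fin (n + 1))) := by
    rw [hv]; rfl
  obtain ⟨p, t⟩ | b' := u
  · exact hb ⟨p, congrArg Prod.fst hju⟩
  obtain ⟨q, s⟩ | c := v
  · rcases hadj with ⟨_, _, h', _, _⟩ | ⟨_, _, _, h', _⟩ <;> simp at h'
  · have h2 : ((c, (0 : Fin (n + 1))) : B × Fin (n + 1)) = (i a, 1) := hjv
    have h3 := congrArg (fun p : B × Fin (n + 1) => (p.2 : ℕ)) h2
    simp only [h1] at h3
    simp at h3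
end

section
/- There is no model structure (W, C, F) on the category of finite graphs in which W is the class of ×-homotopy equivalences and C is the class of graph maps having the homotopy extension property. -/
/-- The class of graph maps of finite graphs having the homotopy extension property. -/
def Chep : MorClass := fun A B f => IsGraphHom A.G B.G f ∧ ∀ n : ℕ, HEP A.G B.G f n

/-! ### Auxiliary material for the proof of `stmt3` -/

/-- The one-point graph with a loop, as a `FinGraph`. -/
abbrev ptFG : FinGraph := ⟨1, ⟨fun _ _ => True, fun h => h⟩⟩

/-- Adjacency of the path `0 - 1 - 2` with loops at `0` and `2` only. -/
abbrev bowAdj : Fin 3 → Fin 3 → Prop := fun x y =>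
  ((x : ℕ) + 1 = (y : ℕ) ∨ (y : ℕ) + 1 = (x : ℕ)) ∨
    ((x : ℕ) = (y : ℕ) ∧ ((x : ℕ) = 0 ∨ (x : ℕ) = 2))

instance : DecidableRel bowAdj := fun _ _ => by unfold bowAdj; infer_instance

/-- The path `0 - 1 - 2` with loops at the two ends, as a `FinGraph`. -/
abbrev bowFG : FinGraph := ⟨3, ⟨bowAdj, by intro x y h; unfold bowAdj at *; omega⟩⟩

/-- If `z0`'s only neighbour is itself, then the track of `z0` through a homotopy
ending at `z0` is constantly `z0`; in particular it starts at `z0`. -/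
lemma track_const {V : Type} (GZ : LoopGraph V) {m : ℕ} (F : V × Fin (m + 1) → V)
    (hF : IsGraphHom (GZ.prod (pathI m)) GZ F) (z0 : V)
    (hloop : GZ.adj z0 z0) (hiso : ∀ y, GZ.adj y z0 → y = z0)
    (hlast : F (z0, Fin.last m) = z0) : F (z0, 0) = z0 := by
  have key : ∀ j : ℕ, F (z0, ⟨m - j, by omega⟩) = z0 := by
    intro j
    induction j with
    | zero =>
        have h0 : (⟨m - 0, by omega⟩ : Fin (m + 1)) = Fin.last m := Fin.ext (by simp)
        rw [h0]; exact hlast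
    | succ j ih =>
        have hadj : (GZ.prod (pathI m)).adj (z0, ⟨m - (j + 1), by omega⟩)
            (z0, ⟨m - j, by omega⟩) :=
          ⟨hloop, show m - (j + 1) ≤ (m - j) + 1 by omega,
            show m - j ≤ (m - (j + 1)) + 1 by omega⟩
        have h := hF hadj
        rw [ih] at h
        exact hiso _ h
  have h0 : (⟨m - m, by omega⟩ : Fin (m + 1)) = 0 := Fin.ext (by simp)
  have hm := key m
  rwa [h0] at hm

/-- there is no model structure on the category of finite graphs whose weak
equivalences are the ×-homotopy equivalences and whose cofibrations are the maps with the
homotopy extension property. -/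
theorem stmt3 : ¬ ∃ Fib : MorClass, ModelStructure Whe Chep Fib := by
  rintro ⟨Fib, ms⟩
  -- the map `I_0 → B` to the looped end `0` of the "bow" graph `B`
  have hfhom : IsGraphHom ptFG.G bowFG.G (fun _ => (0 : Fin 3)) := by
    intro x y _; exact (by decide : bowFG.G.adj 0 0)
  obtain ⟨Z, c, p, hc, hpF, hpW, hpc⟩ := ms.fact_c_fw ptFG bowFG _ hfhom
  obtain ⟨chom, hHEP⟩ := hc
  set z0 : Fin Z.n := c 0 with hz0def
  have hloop : Z.G.adj z0 z0 := chom trivial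
  -- Step 1: HEP of `c` forces `z0` to have no neighbour besides itself.
  have hiso : ∀ y, Z.G.adj y z0 → y = z0 := by
    intro y hy
    let OG : LoopGraph (Option (Fin Z.n)) :=
      { adj := fun o o' =>
          (∃ a b, o = some a ∧ o' = some b ∧ Z.G.adj a b) ∨
          (o = none ∧ o' = none) ∨ (o = some z0 ∧ o' = none) ∨
          (o = none ∧ o' = some z0)
        symm := by
          rintro o o' (⟨a, b, rfl, rfl, h⟩ | ⟨rfl, rfl⟩ | ⟨rfl, rfl⟩ | ⟨rfl, rfl⟩)
          · exact Or.inl ⟨b, a, rfl, rfl, Z.G.symm h⟩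
          · exact Or.inr (Or.inl ⟨rfl, rfl⟩)
          · exact Or.inr (Or.inr (Or.inr ⟨rfl, rfl⟩))
          · exact Or.inr (Or.inr (Or.inl ⟨rfl, rfl⟩)) }
    obtain ⟨G, hGhom, hG0, hGi⟩ :=
      hHEP 1 (Option (Fin Z.n)) OG (fun _ => some z0) some
        (fun x y _ => Or.inl ⟨z0, z0, rfl, rfl, hloop⟩)
        (fun x y h => Or.inl ⟨x, y, rfl, rfl, h⟩)
        (fun a => by rw [Subsingleton.elim a 0, hz0def])
        (fun a => if a.2 = (0 : Fin 2) then some z0 else none)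
        (by
          rintro ⟨a, t⟩ ⟨a', t'⟩ _
          dsimp only
          split_ifs with h1 h2 h2
          · exact Or.inl ⟨z0, z0, rfl, rfl, hloop⟩
          · exact Or.inr (Or.inr (Or.inl ⟨rfl, rfl⟩))
          · exact Or.inr (Or.inr (Or.inr ⟨rfl, rfl⟩))
          · exact Or.inr (Or.inl ⟨rfl, rfl⟩))
        (fun a => if_pos rfl)
    have hedge : (Z.G.prod (pathI 1)).adj (y, 0) (z0, 1) := ⟨hy, (⟨by decide, by decide⟩ : (pathI 1).adj 0 1)⟩
    have h2 := hGhom hedge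
    rw [hG0 y, hz0def] at h2
    rw [hGi 0 1] at h2
    have hF1 : (if ((1 : Fin 2) : Fin 2) = (0 : Fin 2) then some z0 else none)
        = (none : Option (Fin Z.n)) := if_neg (by decide)
    rw [hF1] at h2
    rcases h2 with ⟨a, b, _, hb, _⟩ | ⟨h, _⟩ | ⟨h, _⟩ | ⟨h, _⟩
    · exact absurd hb.symm (by simp)
    · exact absurd h (by simp)
    · exact Option.some.inj h
    · exact absurd h (by simp)
  -- Step 2: unpack the homotopy equivalence `p`.
  obtain ⟨php, q, hq, ⟨m, F1, hF1, h10, h1l⟩, ⟨k, F2, hF2, h20, h2l⟩⟩ := hpW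
  have hpz0 : p z0 = 0 := by rw [hz0def]; exact hpc 0
  have hqp : q (p z0) = z0 := by
    have ht := track_const Z.G F1 hF1 z0 hloop hiso (by simpa using h1l z0)
    have h0 := h10 z0
    rw [ht] at h0
    exact h0.symm
  have hq0 : q 0 = z0 := by rw [← hpz0]; exact hqp
  have hq1 : q 1 = z0 := by
    have := hq (show bowFG.G.adj 0 1 by decide)
    rw [hq0] at this
    exact hiso _ (Z.G.symm this)
  have hq2 : q 2 = z0 := by
    have := hq (show bowFG.G.adj 1 2 by decide)
    rw [hq1] at this
    exact hiso _ (Z.G.symm this)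
  -- Step 3: track the looped vertex `2` through the homotopy `p ∘ q ≃ id`.
  have key2 : ∀ j : ℕ, (hj : j ≤ k) → F2 (2, ⟨j, by omega⟩) = 0 := by
    intro j
    induction j with
    | zero =>
        intro _
        have h0 : (⟨0, by omega⟩ : Fin (k + 1)) = 0 := Fin.ext (by simp)
        rw [h0]
        have := h20 2
        simp only [Function.comp_apply] at this
        rw [hq2, hpz0] at this
        exact this
    | succ j ih =>
        intro hj
        have hprev := ih (by omega)
        have hadj1 : (bowFG.G.prod (pathI k)).adj (2, ⟨j, by omega⟩)
            (2, ⟨j + 1, by omega⟩) :=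
          ⟨(by decide : bowFG.G.adj 2 2), show j ≤ (j + 1) + 1 by omega, show j + 1 ≤ j + 1 by omega⟩
        have hadj2 : (bowFG.G.prod (pathI k)).adj (2, ⟨j + 1, by omega⟩)
            (2, ⟨j + 1, by omega⟩) :=
          ⟨(by decide : bowFG.G.adj 2 2), show j + 1 ≤ (j + 1) + 1 by omega, show j + 1 ≤ (j + 1) + 1 by omega⟩
        have e1 := hF2 hadj1
        rw [hprev] at e1
        have e2 := hF2 hadj2
        have hconc : ∀ v : Fin 3, bowAdj 0 v → bowAdj v v → v = 0 := by decide
        exact hconc _ e1 e2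
  have hfinal := h2l 2
  have hk := key2 k le_rfl
  have hlk : (⟨k, by omega⟩ : Fin (k + 1)) = Fin.last k := Fin.ext (by simp)
  rw [hlk, hfinal] at hk
  exact absurd hk (by decide)
end

section
/- Let i : A → B be an induced subgraph inclusion and f : A → C any graph map. Then the cobase change i′ : C → G of i along f (where G is the pushout of i and f) is an induced subgraph inclusion. -/
open Classical in
noncomputable def repFn {A B C : Type} (i : A → B) (f : A → C) : B ⊕ C → B ⊕ C :=
  fun x => match x with
  | Sum.inl b => if h : ∃ a, i a = b then Sum.inr (f h.choose) else Sum.inl b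
  | Sum.inr c => Sum.inr c

theorem repFn_eq {A B C : Type} {i : A → B} {f : A → C} (hinj : Function.Injective i)
    {x y : B ⊕ C} (h : Quot.mk (pushoutRel i f) x = Quot.mk (pushoutRel i f) y) :
    repFn i f x = repFn i f y := by
  have hresp : ∀ x y, pushoutRel i f x y → repFn i f x = repFn i f y := by
    rintro _ _ ⟨a, rfl, rfl⟩
    simp only [repFn]
    have hex : ∃ a', i a' = i a := ⟨a, rfl⟩
    rw [dif_pos hex]
    have : hex.choose = a := hinj hex.choose_spec
    rw [this]
  exact congrArg (Quot.lift (repFn i f) hresp) h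

/-- the cobase change of an induced subgraph inclusion is an induced subgraph
inclusion. -/
theorem stmt5 {A B C : Type} (GA : LoopGraph A) (GB : LoopGraph B) (GC : LoopGraph C)
    (i : A → B) (f : A → C)
    (hi : IsGraphHom GA GB i) (hf : IsGraphHom GA GC f)
    (hind : Function.Injective i ∧ ∀ a a' : A, GA.adj a a' ↔ GB.adj (i a) (i a')) :
    Function.Injective (cobase i f) ∧
      ∀ c c' : C, GC.adj c c' ↔ (pushoutGraph GB GC i f).adj (cobase i f c) (cobase i f c') := by
  obtain ⟨hinj, hindadj⟩ := hind
  constructor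
  · intro c c' h
    have := repFn_eq hinj (i := i) (f := f) (x := Sum.inr c) (y := Sum.inr c') h
    simpa [repFn] using this
  · intro c c'
    constructor
    · intro h
      exact ⟨Sum.inr c, Sum.inr c', rfl, rfl, Or.inr ⟨c, c', rfl, rfl, h⟩⟩
    · rintro ⟨u, v, hu, hv, hadj⟩
      rcases hadj with ⟨b, b', rfl, rfl, hbb⟩ | ⟨d, d', rfl, rfl, hdd⟩
      · have h1 := repFn_eq hinj (i := i) (f := f) hu
        have h2 := repFn_eq hinj (i := i) (f := f) hv
        simp only [repFn] at h1 h2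
        by_cases e1 : ∃ a, i a = b
        · by_cases e2 : ∃ a, i a = b'
          · rw [dif_pos e1] at h1; rw [dif_pos e2] at h2
            have hc : f e1.choose = c := Sum.inr.inj h1
            have hc' : f e2.choose = c' := Sum.inr.inj h2
            have : GA.adj e1.choose e2.choose := by
              rw [hindadj]; rw [e1.choose_spec, e2.choose_spec]; exact hbb
            have := hf this
            rwa [hc, hc'] at this
          · rw [dif_neg e2] at h2; exact absurd h2 (by simp)
        · rw [dif_neg e1] at h1; exact absurd h1 (by simp)
      · have h1 := repFn_eq hinj (i := i) (f := f) hu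
        have h2 := repFn_eq hinj (i := i) (f := f) hv
        simp only [repFn, Sum.inr.injEq] at h1 h2
        rwa [h1, h2] at hdd
end

section
/- Let i : A → A ∪ {v} be an unfold, say with N_{A∪{v}}(v) ⊆ N_{A∪{v}}(v′) for a vertex v′ ∈ V(A), and let f : A → C be any graph map. Then the cobase change i′ : C → G of i along f (where G is the pushout of i and f) is an unfold: G is obtained from C (embedded as an induced subgraph) by adding the single new vertex [v], and N_G([v]) ⊆ N_G([f(v′)]). -/
section aux
variable {A B C : Type} (i : A → B) (f : A → C)

def myR : B ⊕ C → B ⊕ C → Prop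
  | Sum.inl b, Sum.inl b' => b = b' ∨ ∃ a a', i a = b ∧ i a' = b' ∧ f a = f a'
  | Sum.inl b, Sum.inr c => ∃ a, i a = b ∧ f a = c
  | Sum.inr c, Sum.inl b => ∃ a, i a = b ∧ f a = c
  | Sum.inr c, Sum.inr c' => c = c'

theorem myR_refl (x : B ⊕ C) : myR i f x x := by cases x <;> simp [myR]

theorem myR_symm {x y : B ⊕ C} (h : myR i f x y) : myR i f y x := by
  cases x <;> cases y <;> dsimp only [myR] at *
  · rcases h with rfl | ⟨a, a', h1, h2, h3⟩
    · exact Or.inl rfl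
    · exact Or.inr ⟨a', a, h2, h1, h3.symm⟩
  · exact h
  · exact h
  · exact h.symm

theorem myR_trans (hi : Function.Injective i) {x y z : B ⊕ C}
    (h1 : myR i f x y) (h2 : myR i f y z) : myR i f x z := by
  cases x <;> cases y <;> cases z <;> dsimp only [myR] at *
  · rcases h1 with rfl | ⟨a, a', rfl, rfl, hff⟩
    · exact h2
    · rcases h2 with rfl | ⟨a2, a2', h2a, rfl, hff2⟩
      · exact Or.inr ⟨a, a', rfl, rfl, hff⟩
      · exact Or.inr ⟨a, a2', rfl, rfl, by rw [hff, ← hi h2a]; exact hff2⟩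
  · rcases h1 with rfl | ⟨a, a', rfl, rfl, hff⟩
    · exact h2
    · rcases h2 with ⟨a2, h2a, rfl⟩
      exact ⟨a, rfl, by rw [hff, ← hi h2a]⟩
  · rcases h1 with ⟨a, rfl, rfl⟩
    rcases h2 with ⟨a2, rfl, hf2⟩
    exact Or.inr ⟨a, a2, rfl, rfl, hf2.symm⟩
  · rcases h1 with ⟨a, rfl, rfl⟩
    exact ⟨a, rfl, h2⟩
  · rcases h1 with ⟨a, rfl, rfl⟩
    rcases h2 with rfl | ⟨a2, a2', h2a, rfl, hff2⟩
    · exact ⟨a, rfl, rfl⟩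
    · exact ⟨a2', rfl, by rw [← hff2, hi h2a]⟩
  · rcases h1 with ⟨a, rfl, rfl⟩
    rcases h2 with ⟨a2, h2a, rfl⟩
    rw [hi h2a]
  · subst h1; exact h2
  · exact h1.trans h2

/-- the cobase change of an unfold `i : A → A ∪ {v}` (with `N(v) ⊆ N(i v')`)
along any graph map `f : A → C` is an unfold: the pushout is obtained from `C` (embedded as an
induced subgraph) by adding the single new vertex `[v]`, and `N([v]) ⊆ N([f v'])`. -/
theorem stmt6 {A B C : Type} (GA : LoopGraph A) (GB : LoopGraph B) (GC : LoopGraph C)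
    (i : A → B)
    (hind : Function.Injective i ∧ ∀ a a' : A, GA.adj a a' ↔ GB.adj (i a) (i a'))
    (v : B) (hv : v ∉ Set.range i) (honly : ∀ b : B, b ∉ Set.range i → b = v)
    (v' : A) (hfold : ∀ b : B, GB.adj v b → GB.adj (i v') b)
    (f : A → C) (hf : IsGraphHom GA GC f) :
    Function.Injective (cobase i f) ∧
    (∀ c c' : C, GC.adj c c' ↔ (pushoutGraph GB GC i f).adj (cobase i f c) (cobase i f c')) ∧
    (Quot.mk (pushoutRel i f) (Sum.inl v) ∉ Set.range (cobase i f)) ∧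
    (∀ x : Pushout i f, x ∉ Set.range (cobase i f) → x = Quot.mk (pushoutRel i f) (Sum.inl v)) ∧
    (∀ x : Pushout i f,
      (pushoutGraph GB GC i f).adj (Quot.mk (pushoutRel i f) (Sum.inl v)) x →
        (pushoutGraph GB GC i f).adj (cobase i f (f v')) x) := by
  have hi := hind.1
  have key : ∀ x y : B ⊕ C,
      Quot.mk (pushoutRel i f) x = Quot.mk (pushoutRel i f) y ↔ myR i f x y := by
    intro x y
    rw [Quot.eq]
    constructor
    · intro h
      induction h with
      | rel a b hr => rcases hr with ⟨a0, rfl, rfl⟩; exact ⟨a0, rfl, rfl⟩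
      | refl a => exact myR_refl i f a
      | symm a b _ ih => exact myR_symm i f ih
      | trans a b c _ _ ih1 ih2 => exact myR_trans i f hi ih1 ih2
    · intro h
      cases x <;> cases y <;> dsimp only [myR] at h
      · rcases h with rfl | ⟨a, a', rfl, rfl, hff⟩
        · exact .refl _
        · exact .trans _ _ _ (.rel _ _ ⟨a, rfl, rfl⟩)
            (.symm _ _ (.rel _ _ ⟨a', rfl, congrArg Sum.inr hff⟩))
      · rcases h with ⟨a, rfl, rfl⟩
        exact .rel _ _ ⟨a, rfl, rfl⟩
      · rcases h with ⟨a, rfl, rfl⟩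
        exact .symm _ _ (.rel _ _ ⟨a, rfl, rfl⟩)
      · exact h ▸ .refl _
  refine ⟨?_, ?_, ?_, ?_, ?_⟩
  · intro c c' h
    exact (key _ _).1 h
  · intro c c'
    constructor
    · intro h
      exact ⟨Sum.inr c, Sum.inr c', rfl, rfl, Or.inr ⟨c, c', rfl, rfl, h⟩⟩
    · rintro ⟨u, w, hu, hw, hadj⟩
      rcases hadj with ⟨b, b', rfl, rfl, hbb⟩ | ⟨d, d', rfl, rfl, hdd⟩
      · obtain ⟨a, rfl, rfl⟩ := (key _ _).1 hu
        obtain ⟨a', rfl, rfl⟩ := (key _ _).1 hw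
        exact hf ((hind.2 a a').2 hbb)
      · obtain rfl := (key _ _).1 hu
        obtain rfl := (key _ _).1 hw
        exact hdd
  · rintro ⟨c, hc⟩
    obtain ⟨a, ha, -⟩ := (key _ _).1 hc
    exact hv ⟨a, ha⟩
  · intro x hx
    induction x using Quot.ind with
    | _ u =>
      cases u with
      | inr c => exact absurd ⟨c, rfl⟩ hx
      | inl b =>
        by_cases hb : b ∈ Set.range i
        · obtain ⟨a, rfl⟩ := hb
          exact absurd ⟨f a, (Quot.sound ⟨a, rfl, rfl⟩).symm⟩ hx
        · rw [honly b hb]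
  · rintro x ⟨u, w, hu, hw, hadj⟩
    have hu' := (key _ _).1 hu
    cases u with
    | inr c =>
      obtain ⟨a, ha, -⟩ := hu'
      exact absurd ⟨a, ha⟩ hv
    | inl b =>
      rcases hu' with rfl | ⟨a, a', -, ha', -⟩
      · rcases hadj with ⟨b0, b', heq, rfl, hbb⟩ | ⟨c, c', heq, -, -⟩
        · obtain rfl : b = b0 := Sum.inl.injEq _ _ ▸ heq
          exact ⟨Sum.inl (i v'), Sum.inl b', Quot.sound ⟨v', rfl, rfl⟩, hw,
            Or.inl ⟨i v', b', rfl, rfl, hfold b' hbb⟩⟩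
        · exact absurd heq (by simp)
      · exact absurd ⟨a', ha'⟩ hv
end aux
end

section
/- Let X be a connected graph containing at least one edge, let Y be a connected graph, and let p : X → Y be a graph map having the right lifting property with respect to every unfold. Then p is surjective on vertices of Y, and moreover for every edge y₁y₂ ∈ E(Y) there exist x₁, x₂ ∈ V(X) with x₁x₂ ∈ E(X), p(x₁) = y₁ and p(x₂) = y₂. -/
/-- Auxiliary graph on `Bool`: a single edge. -/
def auxGA : LoopGraph Bool where
  adj x y := x ≠ y
  symm h := Ne.symm h

/-- Auxiliary graph on `Fin 3`: edges `0-1` and `0-2`. -/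
def auxGB : LoopGraph (Fin 3) where
  adj x y := (x = 0 ∧ y = 1) ∨ (x = 1 ∧ y = 0) ∨ (x = 0 ∧ y = 2) ∨ (x = 2 ∧ y = 0)
  symm h := by tauto

/-- The inclusion `Bool → Fin 3`. -/
def auxI : Bool → Fin 3 := fun b => if b then 1 else 0

lemma auxI_unfold : IsUnfold auxGA auxGB auxI := by
  refine ⟨?_, ?_, 2, ?_, ?_, true, ?_⟩
  · intro a b h
    cases a <;> cases b <;> simp [auxI] at h ⊢
  · intro x y; cases x <;> cases y <;> simp [auxI, auxGA, auxGB]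
  · rintro ⟨b, hb⟩; cases b <;> simp [auxI] at hb
  · intro b hb
    fin_cases b
    · exact absurd ⟨false, rfl⟩ hb
    · exact absurd ⟨true, rfl⟩ hb
    · rfl
  · intro b hb
    rcases hb with ⟨h1, h2⟩ | ⟨h1, h2⟩ | ⟨h1, h2⟩ | ⟨h1, h2⟩ <;>
      simp_all [auxI, auxGB]

lemma step_lift {X Y : Type} (GX : LoopGraph X) (GY : LoopGraph Y)
    (p : X → Y) (hp : IsGraphHom GX GY p) (hrlp : RLPunfolds GX GY p)
    {x₁ x₂ : X} (hx : GX.adj x₁ x₂) {y₂ : Y} (hy : GY.adj (p x₁) y₂) :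
    ∃ x₃ : X, GX.adj x₁ x₃ ∧ p x₃ = y₂ := by
  set f : Bool → X := fun b => if b then x₂ else x₁ with hf
  set g : Fin 3 → Y := ![p x₁, p x₂, y₂] with hg
  have hfh : IsGraphHom auxGA GX f := by
    intro a b hab
    cases a <;> cases b <;> simp_all [auxGA, f]
    · exact GX.symm hx
  have hgh : IsGraphHom auxGB GY g := by
    intro a b hab
    rcases hab with ⟨h1, h2⟩ | ⟨h1, h2⟩ | ⟨h1, h2⟩ | ⟨h1, h2⟩ <;>
      subst h1 <;> subst h2 <;> simp [g]
    · exact hp hx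
    · exact GY.symm (hp hx)
    · exact hy
    · exact GY.symm hy
  have hcomm : ∀ a, p (f a) = g (auxI a) := by
    intro a; cases a <;> simp [f, g, auxI]
  obtain ⟨h, hhom, hi, hpb⟩ := hrlp Bool (Fin 3) auxGA auxGB auxI auxI_unfold f g hfh hgh hcomm
  refine ⟨h 2, ?_, ?_⟩
  · have : GX.adj (h 0) (h 2) := hhom (by simp [auxGB] : auxGB.adj 0 2)
    have h0 : h 0 = x₁ := by
      have := hi false; simpa [auxI, f] using this
    rwa [h0] at this
  · have := hpb 2; simpa [g] using this

lemma edge_at {X : Type} (GX : LoopGraph X) (hX : GX.Connected)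
    (hXe : ∃ x x' : X, GX.adj x x') (z : X) : ∃ w : X, GX.adj z w := by
  obtain ⟨x, x', hxx⟩ := hXe
  have hpath := hX x z
  induction hpath with
  | refl => exact ⟨x', hxx⟩
  | tail _ hadj _ => exact ⟨_, GX.symm hadj⟩

/-- a graph map between connected graphs (the source having an edge) with the
right lifting property with respect to every unfold is surjective on vertices and edges. -/
theorem stmt7 {X Y : Type} (GX : LoopGraph X) (GY : LoopGraph Y)
    (hX : GX.Connected) (hXe : ∃ x x' : X, GX.adj x x') (hY : GY.Connected)
    (p : X → Y) (hp : IsGraphHom GX GY p) (hrlp : RLPunfolds GX GY p) :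
    Function.Surjective p ∧
      ∀ y₁ y₂ : Y, GY.adj y₁ y₂ → ∃ x₁ x₂ : X, GX.adj x₁ x₂ ∧ p x₁ = y₁ ∧ p x₂ = y₂ := by
  have key : ∀ x₁ : X, ∀ y₂ : Y, GY.adj (p x₁) y₂ →
      ∃ x₃ : X, GX.adj x₁ x₃ ∧ p x₃ = y₂ := by
    intro x₁ y₂ hy
    obtain ⟨x₂, hx⟩ := edge_at GX hX hXe x₁
    exact step_lift GX GY p hp hrlp hx hy
  obtain ⟨x₀, -, -⟩ := hXe
  have hsurj : Function.Surjective p := by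
    intro y
    have hpath := hY (p x₀) y
    induction hpath with
    | refl => exact ⟨x₀, rfl⟩
    | tail _ hadj ih =>
        obtain ⟨x₁, hx₁⟩ := ih
        obtain ⟨x₃, -, hx₃⟩ := key x₁ _ (hx₁ ▸ hadj)
        exact ⟨x₃, hx₃⟩
  refine ⟨hsurj, ?_⟩
  intro y₁ y₂ hy
  obtain ⟨x₁, hx₁⟩ := hsurj y₁
  obtain ⟨x₂, hadj, hx₂⟩ := key x₁ y₂ (hx₁ ▸ hy)
  exact ⟨x₁, x₂, hadj, hx₁, hx₂⟩
end

section
/- Let X and Y be finite connected graphs and let p : X → Y be a ×-homotopy equivalence having the right lifting property with respect to every unfold. Then X folds to Y: there is a finite sequence of fold maps reducing X to an induced subgraph X′ of X such that the restriction of p to X′ is an isomorphism of graphs onto Y. -/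
/-- Single-step homotopy lifting along a map with RLP against unfolds. -/
lemma step_lift_s9 {X Y Z : Type} [Fintype Z] {GX : LoopGraph X} {GY : LoopGraph Y} (GZ : LoopGraph Z)
    {p : X → Y} (hrlp : RLPunfolds GX GY p)
    (Hn Hn1 : Z → Y) (hHn : IsGraphHom GZ GY Hn) (hHn1 : IsGraphHom GZ GY Hn1)
    (hcross : ∀ z z', GZ.adj z z' → GY.adj (Hn z) (Hn1 z'))
    (h0 : Z → X) (hh0 : IsGraphHom GZ GX h0) (hph0 : ∀ z, p (h0 z) = Hn z) :
    ∃ h1 : Z → X, IsGraphHom GZ GX h1 ∧ (∀ z, p (h1 z) = Hn1 z) ∧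
      (∀ z z', GZ.adj z z' → GX.adj (h0 z) (h1 z')) := by
  classical
  have key : ∀ K : Finset Z, ∃ h : Z → X,
      (∀ z ∈ K, p (h z) = Hn1 z) ∧
      (∀ z ∈ K, ∀ z', GZ.adj z z' → GX.adj (h z) (h0 z')) ∧
      (∀ z ∈ K, ∀ z' ∈ K, GZ.adj z z' → GX.adj (h z) (h z')) := by
    intro K
    induction K using Finset.induction_on with
    | empty => exact ⟨h0, by simp, by simp, by simp⟩
    | @insert a K ha IH =>
      obtain ⟨h, hfib, hcr, hlv⟩ := IH
      let A := {w : Z × Bool // w.2 = false ∨ w.1 ∈ K}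
      let B := {w : Z × Bool // w.2 = false ∨ w.1 ∈ insert a K}
      let GA : LoopGraph A := ⟨fun u w => GZ.adj u.val.1 w.val.1, fun h => GZ.symm h⟩
      let GB : LoopGraph B := ⟨fun u w => GZ.adj u.val.1 w.val.1, fun h => GZ.symm h⟩
      let i : A → B := fun w => ⟨w.val, w.prop.imp id fun hw => Finset.mem_insert_of_mem hw⟩
      have hunf : IsUnfold GA GB i := by
        refine ⟨?_, fun x y => Iff.rfl, ⟨(a, true), Or.inr (Finset.mem_insert_self a K)⟩,
          ?_, ?_, ⟨(a, false), Or.inl rfl⟩, ?_⟩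
        · intro u w huw
          have hv := congrArg Subtype.val huw
          exact Subtype.ext hv
        · rintro ⟨w, hw⟩
          have hval : w.val = (a, true) := congrArg Subtype.val hw
          rcases w.prop with h2 | h2
          · rw [hval] at h2; exact absurd h2 (by simp)
          · rw [show w.val.1 = a from congrArg Prod.fst hval] at h2; exact ha h2
        · rintro ⟨⟨z, lvl⟩, hprop⟩ hb
          cases lvl
          · exact absurd ⟨⟨(z, false), Or.inl rfl⟩, rfl⟩ hb
          · rcases hprop with h2 | h2
            · exact absurd h2 (by simp)
            · rcases Finset.mem_insert.mp h2 with h3 | h3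
              · subst h3; rfl
              · exact absurd ⟨⟨(z, true), Or.inr h3⟩, rfl⟩ hb
        · intro b hb
          exact hb
      let f : A → X := fun w => if w.val.2 = true then h w.val.1 else h0 w.val.1
      let g : B → Y := fun w => if w.val.2 = true then Hn1 w.val.1 else Hn w.val.1
      have memA : ∀ w : A, w.val.2 = true → w.val.1 ∈ K := by
        rintro ⟨⟨z, lvl⟩, hprop⟩ h2
        rcases hprop with h3 | h3
        · simp at h2 h3; rw [h2] at h3; exact absurd h3 (by simp)
        · exact h3
      have hf : IsGraphHom GA GX f := by
        rintro u w hadj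
        show GX.adj (if u.val.2 = true then h u.val.1 else h0 u.val.1)
          (if w.val.2 = true then h w.val.1 else h0 w.val.1)
        by_cases hu : u.val.2 = true <;> by_cases hw2 : w.val.2 = true <;>
          simp only [if_pos, if_neg, hu, hw2, if_true, if_false]
        · exact hlv _ (memA u hu) _ (memA w hw2) hadj
        · exact hcr _ (memA u hu) _ hadj
        · exact GX.symm (hcr _ (memA w hw2) _ (GZ.symm hadj))
        · exact hh0 hadj
      have hg : IsGraphHom GB GY g := by
        rintro u w hadj
        show GY.adj (if u.val.2 = true then Hn1 u.val.1 else Hn u.val.1)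
          (if w.val.2 = true then Hn1 w.val.1 else Hn w.val.1)
        by_cases hu : u.val.2 = true <;> by_cases hw2 : w.val.2 = true <;>
          simp only [if_pos, if_neg, hu, hw2, if_true, if_false]
        · exact hHn1 hadj
        · exact GY.symm (hcross _ _ (GZ.symm hadj))
        · exact hcross _ _ hadj
        · exact hHn hadj
      have hsq : ∀ w : A, p (f w) = g (i w) := by
        intro w
        show p (if w.val.2 = true then h w.val.1 else h0 w.val.1)
          = if w.val.2 = true then Hn1 w.val.1 else Hn w.val.1
        by_cases hw2 : w.val.2 = true <;> simp only [hw2, if_true, if_false]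
        · exact hfib _ (memA w hw2)
        · exact hph0 _
      obtain ⟨l, hlhom, hli, hlp⟩ := hrlp A B GA GB i hunf f g hf hg hsq
      refine ⟨fun z => if hz : z ∈ insert a K then l ⟨(z, true), Or.inr hz⟩ else h0 z, ?_, ?_, ?_⟩
      · intro z hz
        simp only [dif_pos hz]
        rw [hlp ⟨(z, true), Or.inr hz⟩]
        show (if _ then _ else _) = _
        rw [if_pos rfl]
      · intro z hz z' hadj
        simp only [dif_pos hz]
        have e0 : l ⟨(z', false), Or.inl rfl⟩ = h0 z' := by
          have := hli ⟨(z', false), Or.inl rfl⟩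
          rw [show (i ⟨(z', false), Or.inl rfl⟩) = ⟨(z', false), Or.inl rfl⟩ from Subtype.ext rfl] at this
          rw [this]
          show (if (false : Bool) = true then h z' else h0 z') = h0 z'
          simp
        rw [← e0]
        exact hlhom (show GZ.adj z z' from hadj)
      · intro z hz z' hz' hadj
        simp only [dif_pos hz, dif_pos hz']
        exact hlhom (show GZ.adj z z' from hadj)
  obtain ⟨h, hfib, hcr, hlv⟩ := key Finset.univ
  refine ⟨h, ?_, ?_, ?_⟩
  · intro z z' hadj; exact hlv z (Finset.mem_univ _) z' (Finset.mem_univ _) hadj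
  · intro z; exact hfib z (Finset.mem_univ _)
  · intro z z' hadj
    exact GX.symm (hcr z' (Finset.mem_univ _) z (GZ.symm hadj))

/-- Chain-indexed homotopy lifting along a map with RLP against unfolds. -/
lemma chain_lift {X Y Z : Type} [Fintype Z] {GX : LoopGraph X} {GY : LoopGraph Y} (GZ : LoopGraph Z)
    {p : X → Y} (hrlp : RLPunfolds GX GY p) (n : ℕ) (H : ℕ → Z → Y)
    (hlvl : ∀ t, t ≤ n → IsGraphHom GZ GY (H t))
    (hcons : ∀ t, t < n → ∀ z z', GZ.adj z z' → GY.adj (H t z) (H (t + 1) z'))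
    (h0 : Z → X) (hh0 : IsGraphHom GZ GX h0) (hp0 : ∀ z, p (h0 z) = H 0 z) :
    ∃ G : ℕ → Z → X, G 0 = h0 ∧ (∀ t, t ≤ n → IsGraphHom GZ GX (G t)) ∧
      (∀ t, t < n → ∀ z z', GZ.adj z z' → GX.adj (G t z) (G (t + 1) z')) ∧
      (∀ t, t ≤ n → ∀ z, p (G t z) = H t z) := by
  induction n with
  | zero =>
    refine ⟨fun _ => h0, rfl, fun t ht => hh0, fun t ht => absurd ht (by omega), ?_⟩
    intro t ht z
    interval_cases t
    exact hp0 z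
  | succ n IH =>
    obtain ⟨G, hG0, hGl, hGc, hGp⟩ := IH (fun t ht => hlvl t (by omega))
      (fun t ht => hcons t (by omega))
    obtain ⟨h1, hh1hom, hh1p, hh1cross⟩ := step_lift_s9 GZ hrlp (H n) (H (n + 1))
      (hlvl n (by omega)) (hlvl (n + 1) (by omega)) (hcons n (by omega))
      (G n) (hGl n (by omega)) (hGp n (by omega))
    refine ⟨fun t => if t ≤ n then G t else h1, by simp [hG0], ?_, ?_, ?_⟩
    · intro t ht
      by_cases h : t ≤ n
      · simpa [h] using hGl t h
      · simpa [h] using hh1hom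
    · intro t ht z z' hadj
      by_cases h : t + 1 ≤ n
      · simpa [h, show t ≤ n by omega] using hGc t (by omega) z z' hadj
      · have ht' : t = n := by omega
        subst ht'
        simpa [h, show t ≤ t from le_refl t] using hh1cross z z' hadj
    · intro t ht z
      by_cases h : t ≤ n
      · simpa [h] using hGp t h z
      · have ht' : t = n + 1 := by omega
        subst ht'
        simpa [h] using hh1p z

/-- Base case: a strict section whose retraction is the identity on `T`. -/
lemma fold_base {X Y : Type} {GX : LoopGraph X} {GY : LoopGraph Y} {p : X → Y}
    (hp : IsGraphHom GX GY p) (T : Set X) (s : Y → X)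
    (h1 : ∀ y, s y ∈ T) (h2 : ∀ y, p (s y) = y)
    (h3 : ∀ y y', GY.adj y y' → GX.adj (s y) (s y'))
    (h6 : ∀ x ∈ T, s (p x) = x) (h10 : FoldsTo GX T) :
    ∃ S : Set X, S ⊆ T ∧ FoldsTo GX S ∧ Set.BijOn p S Set.univ ∧
      ∀ x ∈ S, ∀ x' ∈ S, (GX.adj x x' ↔ GY.adj (p x) (p x')) := by
  refine ⟨T, le_refl T, h10, ⟨fun x _ => Set.mem_univ _, ?_, ?_⟩, ?_⟩
  · intro x hx x' hx' hpe
    rw [← h6 x hx, ← h6 x' hx', hpe]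
  · intro y _
    exact ⟨s y, h1 y, h2 y⟩
  · intro x hx x' hx'
    constructor
    · exact fun ha => hp ha
    · intro ha
      have := h3 _ _ ha
      rwa [h6 x hx, h6 x' hx'] at this

lemma fold_main {X Y : Type} [Fintype X] {GX : LoopGraph X} {GY : LoopGraph Y} {p : X → Y}
    (hp : IsGraphHom GX GY p) :
    ∀ (N M : ℕ) (T : Set X) (s : Y → X) (c : ℕ → X → X),
      T.ncard + M ≤ N →
      (∀ y, s y ∈ T) → (∀ y, p (s y) = y) →
      (∀ y y', GY.adj y y' → GX.adj (s y) (s y')) →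
      (∀ t, t ≤ M → ∀ x ∈ T, c t x ∈ T) →
      (∀ x ∈ T, c 0 x = x) →
      (∀ x ∈ T, c M x = s (p x)) →
      (∀ t, t ≤ M → ∀ x ∈ T, ∀ x' ∈ T, GX.adj x x' → GX.adj (c t x) (c t x')) →
      (∀ t, t < M → ∀ x ∈ T, ∀ x' ∈ T, GX.adj x x' → GX.adj (c t x) (c (t + 1) x')) →
      (∀ t, t ≤ M → ∀ x ∈ T, p (c t x) = p x) →
      FoldsTo GX T →
      ∃ S : Set X, S ⊆ T ∧ FoldsTo GX S ∧ Set.BijOn p S Set.univ ∧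
        ∀ x ∈ S, ∀ x' ∈ S, (GX.adj x x' ↔ GY.adj (p x) (p x')) := by
  classical
  intro N
  induction N with
  | zero =>
    intro M T s c hle h1 h2 h3 h4 h5 h6 h7 h8 h9 h10
    have hM : M = 0 := by omega
    subst hM
    exact fold_base hp T s h1 h2 h3 (fun x hx => by rw [← h6 x hx, h5 x hx]) h10
  | succ N IH =>
    intro M T s c hle h1 h2 h3 h4 h5 h6 h7 h8 h9 h10
    by_cases hM : M = 0
    · subst hM
      exact fold_base hp T s h1 h2 h3 (fun x hx => by rw [← h6 x hx, h5 x hx]) h10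
    · by_cases hid : ∀ x ∈ T, c 1 x = x
      · -- drop the first (identity) step of the chain
        refine IH (M - 1) T s (fun t => c (t + 1)) (by omega) h1 h2 h3 ?_ ?_ ?_ ?_ ?_ ?_ h10
        · intro t ht x hx; exact h4 (t + 1) (by omega) x hx
        · intro x hx; exact hid x hx
        · intro x hx
          show c (M - 1 + 1) x = s (p x)
          rw [show M - 1 + 1 = M by omega]
          exact h6 x hx
        · intro t ht x hx x' hx' hadj; exact h7 (t + 1) (by omega) x hx x' hx' hadj
        · intro t ht x hx x' hx' hadj; exact h8 (t + 1) (by omega) x hx x' hx' hadj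
        · intro t ht x hx; exact h9 (t + 1) (by omega) x hx
      · push_neg at hid
        obtain ⟨a, haT, hca⟩ := hid
        set b := c 1 a with hbdef
        have hM1 : 1 ≤ M := by omega
        have hbT : b ∈ T := h4 1 hM1 a haT
        have hpb : p b = p a := h9 1 hM1 a haT
        have hab : a ≠ b := fun h => hca h.symm
        have hdom : ∀ x ∈ T, GX.adj a x → GX.adj b x := by
          intro x hx hax
          have := h8 0 (by omega) x hx a haT (GX.symm hax)
          rw [h5 x hx] at this
          exact GX.symm this
        have hfold : FoldsTo GX (T \ {a}) := FoldsTo.step h10 haT hbT hab hdom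
        set ρ : X → X := fun x => if x = a then b else x with hρdef
        have hρT : ∀ x ∈ T, ρ x ∈ T \ {a} := by
          intro x hx
          by_cases hxa : x = a
          · rw [hxa]
            simp only [hρdef, if_pos rfl]
            exact ⟨hbT, fun h => hab (Set.mem_singleton_iff.mp h).symm⟩
          · simp only [hρdef, if_neg hxa]
            exact ⟨hx, hxa⟩
        have hρp : ∀ x, p (ρ x) = p x := by
          intro x
          by_cases hxa : x = a
          · rw [hxa]
            simp only [hρdef, if_pos rfl, hpb]
          · simp only [hρdef, if_neg hxa]
        have hρhom : ∀ x ∈ T, ∀ x' ∈ T, GX.adj x x' → GX.adj (ρ x) (ρ x') := by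
          intro x hx x' hx' hadj
          by_cases hxa : x = a
          · by_cases hxa' : x' = a
            · rw [hxa, hxa'] at hadj ⊢
              simp only [hρdef, if_pos rfl]
              exact hdom b hbT (GX.symm (hdom a haT hadj))
            · rw [hxa] at hadj ⊢
              simp only [hρdef, if_pos rfl, if_neg hxa']
              exact hdom x' hx' hadj
          · by_cases hxa' : x' = a
            · rw [hxa'] at hadj ⊢
              simp only [hρdef, if_pos rfl, if_neg hxa]
              exact GX.symm (hdom x hx (GX.symm hadj))
            · simp only [hρdef, if_neg hxa, if_neg hxa']
              exact hadj
        have hsub : T \ {a} ⊆ T := Set.diff_subset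
        have hncard : (T \ {a}).ncard = T.ncard - 1 :=
          Set.ncard_diff_singleton_of_mem haT
        have hpos : 0 < T.ncard := (Set.ncard_pos (Set.toFinite T)).mpr ⟨a, haT⟩
        obtain ⟨S, hS1, hS2, hS3, hS4⟩ :=
          IH M (T \ {a}) (fun y => ρ (s y)) (fun t x => ρ (c t x)) (by omega)
            (fun y => hρT _ (h1 y))
            (fun y => by rw [hρp, h2])
            (fun y y' hadj => hρhom _ (h1 y) _ (h1 y') (h3 y y' hadj))
            (fun t ht x hx => hρT _ (h4 t ht x (hsub hx)))
            (fun x hx => by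
              show ρ (c 0 x) = x
              rw [h5 x (hsub hx)]
              simp only [hρdef]
              exact if_neg hx.2)
            (fun x hx => by
              show ρ (c M x) = ρ (s (p x))
              rw [h6 x (hsub hx)])
            (fun t ht x hx x' hx' hadj =>
              hρhom _ (h4 t ht x (hsub hx)) _ (h4 t ht x' (hsub hx'))
                (h7 t ht x (hsub hx) x' (hsub hx') hadj))
            (fun t ht x hx x' hx' hadj =>
              hρhom _ (h4 t (by omega) x (hsub hx)) _ (h4 (t + 1) (by omega) x' (hsub hx'))
                (h8 t ht x (hsub hx) x' (hsub hx') hadj))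
            (fun t ht x hx => by rw [hρp, h9 t ht x (hsub hx)])
            hfold
        exact ⟨S, hS1.trans hsub, hS2, hS3, hS4⟩

/-- a ×-homotopy equivalence between finite connected graphs with the right
lifting property with respect to every unfold exhibits `X` as folding to `Y`: a finite
sequence of folds reduces `X` to an induced subgraph `X'` on which `p` restricts to an
isomorphism onto `Y`. -/
theorem stmt9 {X Y : Type} [Fintype X] [Fintype Y] (GX : LoopGraph X) (GY : LoopGraph Y)
    (hX : GX.Connected) (hY : GY.Connected)
    (p : X → Y) (hp : IsHtpyEquiv GX GY p) (hrlp : RLPunfolds GX GY p) :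
    ∃ S : Set X, FoldsTo GX S ∧ Set.BijOn p S Set.univ ∧
      ∀ x ∈ S, ∀ x' ∈ S, (GX.adj x x' ↔ GY.adj (p x) (p x')) := by
  classical
  obtain ⟨hphom, g, hghom, hF1htp, hF2htp⟩ := hp
  obtain ⟨n1, F1, hF1hom, hF1a, hF1b⟩ := hF1htp
  obtain ⟨n2, F2, hF2hom, hF2a, hF2b⟩ := hF2htp
  -- Step 1: construct a strict section s of p by lifting the homotopy p∘g ≃ id.
  set H2 : ℕ → Y → Y := fun t y => F2 (y, ⟨min t n2, by omega⟩) with hH2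
  have hH2lvl : ∀ t, IsGraphHom GY GY (H2 t) := by
    intro t y y' h
    exact hF2hom ⟨h, show min t n2 ≤ min t n2 + 1 by omega,
      show min t n2 ≤ min t n2 + 1 by omega⟩
  have hH2cons : ∀ t, t < n2 → ∀ y y', GY.adj y y' → GY.adj (H2 t y) (H2 (t + 1) y') := by
    intro t ht y y' h
    exact hF2hom ⟨h, show min t n2 ≤ min (t + 1) n2 + 1 by omega,
      show min (t + 1) n2 ≤ min t n2 + 1 by omega⟩
  obtain ⟨Sc, hSc0, hSclvl, hSccons, hScp⟩ := chain_lift GY hrlp n2 H2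
    (fun t _ => hH2lvl t) hH2cons g hghom
    (by
      intro z
      have e : (⟨min 0 n2, by omega⟩ : Fin (n2 + 1)) = 0 := by
        apply Fin.ext; simp
      show p (g z) = F2 (z, ⟨min 0 n2, by omega⟩)
      rw [e, hF2a z]
      rfl)
  set s : Y → X := Sc n2 with hsdef
  have hsp : ∀ y, p (s y) = y := by
    intro y
    have e : (⟨min n2 n2, by omega⟩ : Fin (n2 + 1)) = Fin.last n2 := by
      apply Fin.ext; simp [Fin.last]
    have := hScp n2 le_rfl y
    rw [hH2] at this
    simp only at this
    rw [e] at this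
    rw [hsdef, this, hF2b y]
    rfl
  have hshom : IsGraphHom GY GX s := hSclvl n2 le_rfl
  -- Step 2: the plain chain hc from id to s∘p, of length L
  set L := n1 + n2 with hLdef
  set hc : ℕ → X → X :=
    fun t x => if t < n1 then F1 (x, ⟨n1 - t, by omega⟩) else Sc (min (t - n1) n2) (p x)
    with hhc
  have hclvl : ∀ t, IsGraphHom GX GX (hc t) := by
    intro t x x' h
    simp only [hhc]
    by_cases ht : t < n1
    · simp only [if_pos ht]
      exact hF1hom ⟨h, show n1 - t ≤ (n1 - t) + 1 by omega,
        show n1 - t ≤ (n1 - t) + 1 by omega⟩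
    · simp only [if_neg ht]
      exact hSclvl (min (t - n1) n2) (by omega) (hphom h)
  have hccons : ∀ t, ∀ x x', GX.adj x x' → GX.adj (hc t x) (hc (t + 1) x') := by
    intro t x x' h
    simp only [hhc]
    by_cases ht1 : t + 1 < n1
    · simp only [if_pos ht1, if_pos (show t < n1 by omega)]
      exact hF1hom ⟨h, show n1 - t ≤ (n1 - (t + 1)) + 1 by omega,
        show n1 - (t + 1) ≤ (n1 - t) + 1 by omega⟩
    · by_cases ht : t < n1
      · -- junction : t + 1 = n1
        simp only [if_pos ht, if_neg ht1]
        rw [show min (t + 1 - n1) n2 = 0 by omega]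
        rw [show Sc 0 = g from hSc0]
        rw [show g (p x') = F1 (x', 0) from (hF1a x').symm]
        rw [show (0 : Fin (n1 + 1)) = ⟨0, by omega⟩ from by apply Fin.ext; simp]
        exact hF1hom ⟨h, show n1 - t ≤ 0 + 1 by omega, show 0 ≤ (n1 - t) + 1 by omega⟩
      · simp only [if_neg ht, if_neg (show ¬ t + 1 < n1 by omega)]
        by_cases he : min (t - n1) n2 = min (t + 1 - n1) n2
        · rw [← he]
          exact hSclvl (min (t - n1) n2) (by omega) (hphom h)
        · have he2 : min (t + 1 - n1) n2 = min (t - n1) n2 + 1 ∧ min (t - n1) n2 < n2 := by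
            omega
          rw [he2.1]
          exact hSccons (min (t - n1) n2) he2.2 (p x) (p x') (hphom h)
  have hcstep : ∀ i j, i ≤ j + 1 → j ≤ i + 1 →
      ∀ x x', GX.adj x x' → GX.adj (hc i x) (hc j x') := by
    intro i j hij hji x x' h
    rcases show i = j ∨ j = i + 1 ∨ i = j + 1 by omega with he | he | he
    · subst he; exact hclvl i h
    · subst he; exact hccons i x x' h
    · subst he; exact GX.symm (hccons j x' x (GX.symm h))
  have hc0 : ∀ x, hc 0 x = x := by
    intro x
    simp only [hhc]
    by_cases h0 : 0 < n1
    · simp only [if_pos h0]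
      have e : (⟨n1 - 0, by omega⟩ : Fin (n1 + 1)) = Fin.last n1 := by
        apply Fin.ext; simp [Fin.last]
      rw [e, hF1b x]
      rfl
    · simp only [if_neg h0]
      have hn1 : n1 = 0 := by omega
      rw [show min (0 - n1) n2 = 0 by omega]
      rw [show Sc 0 = g from hSc0]
      rw [show g (p x) = F1 (x, 0) from (hF1a x).symm]
      have e : (0 : Fin (n1 + 1)) = Fin.last n1 := by
        apply Fin.ext; simp [Fin.last, hn1]
      rw [e, hF1b x]
      rfl
  have hcL : ∀ x, hc L x = s (p x) := by
    intro x
    simp only [hhc]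
    rw [if_neg (show ¬ L < n1 by omega)]
    rw [show min (L - n1) n2 = n2 by omega]
  -- Step 3 : lift the reversed track, getting Gc with endpoint e over Y
  obtain ⟨Gc, hGc0, hGclvl, hGccons, hGcp⟩ := chain_lift GX hrlp L
    (fun t x => p (hc (L - t) x))
    (fun t ht x x' h => hphom (hclvl (L - t) h))
    (fun t ht x x' h => hphom (hcstep (L - t) (L - (t + 1)) (by omega) (by omega) x x' h))
    (fun x => x) (fun x x' h => h)
    (by
      intro z
      simp only [Nat.sub_zero]
      rw [hcL z, hsp])
  have hGcid : ∀ x, Gc 0 x = x := fun x => congrFun hGc0 x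
  -- Step 4 : the concatenated chain Cc from id to s∘p∘(Gc L), of length 2L
  set Cc : ℕ → X → X :=
    fun t x => if t ≤ L then hc t x else s (p (Gc (min (t - L) L) x)) with hCc
  have hCclvl : ∀ t, IsGraphHom GX GX (Cc t) := by
    intro t x x' h
    simp only [hCc]
    by_cases ht : t ≤ L
    · simp only [if_pos ht]; exact hclvl t h
    · simp only [if_neg ht]
      exact hshom (hphom (hGclvl (min (t - L) L) (by omega) h))
  have hCccons : ∀ t, t < 2 * L → ∀ x x', GX.adj x x' → GX.adj (Cc t x) (Cc (t + 1) x') := by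
    intro t ht x x' h
    simp only [hCc]
    by_cases ht1 : t + 1 ≤ L
    · simp only [if_pos ht1, if_pos (show t ≤ L by omega)]
      exact hccons t x x' h
    · by_cases ht0 : t ≤ L
      · -- junction t = L
        have htL : t = L := by omega
        subst htL
        simp only [if_pos le_rfl, if_neg ht1]
        rw [hcL x, show min (L + 1 - L) L = 1 by omega]
        rw [show x = Gc 0 x from (hGcid x).symm]
        exact hshom (hphom (hGccons 0 (by omega) x x' h))
      · simp only [if_neg ht0, if_neg (show ¬ t + 1 ≤ L by omega)]
        by_cases he : min (t - L) L = min (t + 1 - L) L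
        · rw [← he]
          exact hshom (hphom (hGclvl (min (t - L) L) (by omega) h))
        · have he2 : min (t + 1 - L) L = min (t - L) L + 1 ∧ min (t - L) L < L := by
            omega
          rw [he2.1]
          exact hshom (hphom (hGccons (min (t - L) L) he2.2 x x' h))
  have hCcstep : ∀ i j, i ≤ 2 * L → j ≤ 2 * L → i ≤ j + 1 → j ≤ i + 1 →
      ∀ x x', GX.adj x x' → GX.adj (Cc i x) (Cc j x') := by
    intro i j hi hj hij hji x x' h
    rcases show i = j ∨ j = i + 1 ∨ i = j + 1 by omega with he | he | he
    · subst he; exact hCclvl i h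
    · subst he; exact hCccons i (by omega) x x' h
    · subst he; exact GX.symm (hCccons j (by omega) x' x (GX.symm h))
  have hCctrack : ∀ t, t ≤ 2 * L → ∀ x,
      p (Cc t x) = p (hc (min (min t (2 * L - t)) L) x) := by
    intro t ht x
    simp only [hCc]
    by_cases ht0 : t ≤ L
    · rw [if_pos ht0, show min (min t (2 * L - t)) L = t by omega]
    · rw [if_neg ht0, show min (t - L) L = t - L by omega]
      rw [hsp]
      rw [hGcp (t - L) (by omega) x]
      rw [show L - (t - L) = min (min t (2 * L - t)) L by omega]
  -- Step 5 : lift the square-flattening homotopy to make the chain fiberwise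
  set HL : ℕ → (X × Fin (2 * L + 1)) → Y :=
    fun u z => p (hc (min (min (z.2 : ℕ) (2 * L - (z.2 : ℕ))) (L - u)) z.1) with hHL
  have hHLlvl : ∀ u, u ≤ L → IsGraphHom (GX.prod (pathI (2 * L))) GY (HL u) := by
    intro u hu z z' hadj
    obtain ⟨hx, h1, h2⟩ := hadj
    exact hphom (hcstep _ _ (by omega) (by omega) _ _ hx)
  have hHLcons : ∀ u, u < L → ∀ z z', (GX.prod (pathI (2 * L))).adj z z' →
      GY.adj (HL u z) (HL (u + 1) z') := by
    intro u hu z z' hadj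
    obtain ⟨hx, h1, h2⟩ := hadj
    exact hphom (hcstep _ _ (by omega) (by omega) _ _ hx)
  have hfin : ∀ z : X × Fin (2 * L + 1), (z.2 : ℕ) ≤ 2 * L := fun z => by
    have := z.2.isLt; omega
  obtain ⟨Lc, hLc0, hLclvl, hLccons, hLcp⟩ := chain_lift (GX.prod (pathI (2 * L))) hrlp L HL
    hHLlvl hHLcons (fun z => Cc (z.2 : ℕ) z.1)
    (by
      intro z z' hadj
      obtain ⟨hx, h1, h2⟩ := hadj
      exact hCcstep _ _ (hfin z) (hfin z') (by omega) (by omega) _ _ hx)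
    (by
      intro z
      have := hCctrack (z.2 : ℕ) (hfin z) z.1
      rw [this]
      simp only [hHL, Nat.sub_zero])
  -- Step 6 : the final fiberwise chain
  set cF : ℕ → X → X := fun v x =>
    if v ≤ L then Lc v (x, ⟨0, by omega⟩)
    else if v ≤ 3 * L then Lc L (x, ⟨min (v - L) (2 * L), by omega⟩)
    else Lc (4 * L - v) (x, ⟨2 * L, by omega⟩) with hcF
  have hLcC : ∀ z : X × Fin (2 * L + 1), Lc 0 z = Cc (z.2 : ℕ) z.1 := fun z => congrFun hLc0 z
  obtain ⟨S, hSsub, hSfold, hSbij, hSedge⟩ := fold_main hphom (Set.univ.ncard + 4 * L) (4 * L)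
    Set.univ s cF le_rfl (fun y => Set.mem_univ _) hsp (fun y y' h => hshom h)
    (fun t ht x hx => Set.mem_univ _)
    (by
      -- cF 0 = id
      intro x hx
      simp only [hcF, if_pos (Nat.zero_le L)]
      rw [hLcC (x, ⟨0, by omega⟩)]
      show Cc 0 x = x
      simp only [hCc, if_pos (Nat.zero_le L)]
      exact hc0 x)
    (by
      -- cF (4L) = s ∘ p
      intro x hx
      simp only [hcF]
      by_cases hL0 : L = 0
      · rw [if_pos (show 4 * L ≤ L by omega), show 4 * L = 0 by omega]
        rw [hLcC _]
        show Cc 0 x = s (p x)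
        simp only [hCc, if_pos (Nat.zero_le L)]
        have e0 : hc 0 x = hc L x := by rw [show L = 0 by omega]
        rw [e0, hcL x]
      · rw [if_neg (show ¬ 4 * L ≤ L by omega), if_neg (show ¬ 4 * L ≤ 3 * L by omega)]
        rw [show 4 * L - 4 * L = 0 by omega, hLcC _]
        show Cc (2 * L) x = s (p x)
        simp only [hCc, if_neg (show ¬ 2 * L ≤ L by omega)]
        rw [show min (2 * L - L) L = L by omega, hGcp L le_rfl x, Nat.sub_self, hc0 x])
    (by
      -- levels are graph maps
      intro v hv x hx x' hx' hadj
      simp only [hcF]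
      by_cases c1 : v ≤ L
      · simp only [if_pos c1]
        exact hLclvl v c1 ⟨hadj, show (0:ℕ) ≤ 0 + 1 by omega, show (0:ℕ) ≤ 0 + 1 by omega⟩
      · by_cases c2 : v ≤ 3 * L
        · simp only [if_neg c1, if_pos c2]
          exact hLclvl L le_rfl ⟨hadj,
            show min (v - L) (2*L) ≤ min (v - L) (2*L) + 1 by omega,
            show min (v - L) (2*L) ≤ min (v - L) (2*L) + 1 by omega⟩
        · simp only [if_neg c1, if_neg c2]
          exact hLclvl (4 * L - v) (by omega) ⟨hadj,
            show 2*L ≤ 2*L + 1 by omega, show 2*L ≤ 2*L + 1 by omega⟩)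
    (by
      -- consecutive maps are ×-adjacent
      intro v hv x hx x' hx' hadj
      simp only [hcF]
      by_cases c1 : v + 1 ≤ L
      · simp only [if_pos c1, if_pos (show v ≤ L by omega)]
        exact hLccons v (by omega) _ _ ⟨hadj,
          show (0:ℕ) ≤ 0 + 1 by omega, show (0:ℕ) ≤ 0 + 1 by omega⟩
      · by_cases c2 : v ≤ L
        · have hL1 : 1 ≤ L := by omega
          simp only [if_pos c2, if_neg c1, if_pos (show v + 1 ≤ 3 * L by omega)]
          rw [show v = L by omega]
          exact hLclvl L le_rfl
            ⟨hadj, show (0 : ℕ) ≤ min (L + 1 - L) (2 * L) + 1 by omega,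
              show min (L + 1 - L) (2 * L) ≤ 0 + 1 by omega⟩
        · by_cases c3 : v + 1 ≤ 3 * L
          · simp only [if_neg c2, if_neg c1, if_pos c3, if_pos (show v ≤ 3 * L by omega)]
            exact hLclvl L le_rfl
              ⟨hadj, show min (v - L) (2 * L) ≤ min (v + 1 - L) (2 * L) + 1 by omega,
                show min (v + 1 - L) (2 * L) ≤ min (v - L) (2 * L) + 1 by omega⟩
          · by_cases c4 : v ≤ 3 * L
            · -- v = 3L : junction into the third branch
              simp only [if_neg c2, if_pos c4, if_neg c1, if_neg c3]
              rw [show 4 * L - (v + 1) = L - 1 by omega]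
              have hstep := hLccons (L - 1) (by omega)
                (x', (⟨2 * L, by omega⟩ : Fin (2 * L + 1)))
                (x, (⟨min (v - L) (2 * L), by omega⟩ : Fin (2 * L + 1)))
                ⟨GX.symm hadj, show 2 * L ≤ min (v - L) (2 * L) + 1 by omega,
                  show min (v - L) (2 * L) ≤ 2 * L + 1 by omega⟩
              rw [show L - 1 + 1 = L by omega] at hstep
              exact GX.symm hstep
            · -- v > 3L : inside the third branch
              simp only [if_neg c2, if_neg c4, if_neg c1,
                if_neg (show ¬ v + 1 ≤ 3 * L by omega)]
              rw [show 4 * L - v = (4 * L - (v + 1)) + 1 by omega]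
              exact GX.symm (hLccons (4 * L - (v + 1)) (by omega)
                (x', (⟨2 * L, by omega⟩ : Fin (2 * L + 1)))
                (x, (⟨2 * L, by omega⟩ : Fin (2 * L + 1)))
                ⟨GX.symm hadj, show 2*L ≤ 2*L + 1 by omega,
                  show 2*L ≤ 2*L + 1 by omega⟩))
    (by
      -- the chain is fiberwise
      intro v hv x hx
      simp only [hcF]
      by_cases c1 : v ≤ L
      · simp only [if_pos c1]
        rw [hLcp v c1 (x, ⟨0, by omega⟩)]
        show p (hc (min (min 0 (2 * L - 0)) (L - v)) x) = p x
        rw [show min (min 0 (2 * L - 0)) (L - v) = 0 by omega, hc0 x]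
      · by_cases c2 : v ≤ 3 * L
        · simp only [if_neg c1, if_pos c2]
          rw [hLcp L le_rfl (x, ⟨min (v - L) (2 * L), by omega⟩)]
          show p (hc (min (min (min (v - L) (2 * L))
            (2 * L - min (v - L) (2 * L))) (L - L)) x) = p x
          rw [show min (min (min (v - L) (2 * L))
            (2 * L - min (v - L) (2 * L))) (L - L) = 0 by omega, hc0 x]
        · simp only [if_neg c1, if_neg c2]
          rw [hLcp (4 * L - v) (by omega) (x, ⟨2 * L, by omega⟩)]
          show p (hc (min (min (2 * L) (2 * L - 2 * L)) (L - (4 * L - v))) x) = p x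
          rw [show min (min (2 * L) (2 * L - 2 * L)) (L - (4 * L - v)) = 0 by omega, hc0 x])
    FoldsTo.univ
  exact ⟨S, hSfold, hSbij, hSedge⟩
end

section
/- Let X and Y be finite connected graphs and let p : X → Y be a ×-homotopy equivalence having the right lifting property with respect to every unfold. Then p admits a section: there exists a graph map s : Y → X with p ∘ s equal to the identity of Y. -/
/-- One unfold step: extend a partial lift over one new vertex using the RLP. -/
lemma ext_step {X Y Z : Type} (GX : LoopGraph X) (GY : LoopGraph Y) (p : X → Y)
    (hrlp : RLPunfolds GX GY p)
    (GZ : LoopGraph Z) (S : Set Z) (v : Z) (hv : v ∉ S) (v' : Z) (hv' : v' ∈ S)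
    (hfold : ∀ b ∈ insert v S, GZ.adj v b → GZ.adj v' b)
    (H : Z → Y) (hH : ∀ u ∈ insert v S, ∀ w ∈ insert v S, GZ.adj u w → GY.adj (H u) (H w))
    (G : Z → X) (hG : ∀ u ∈ S, ∀ w ∈ S, GZ.adj u w → GX.adj (G u) (G w))
    (hpG : ∀ u ∈ S, p (G u) = H u) :
    ∃ G' : Z → X, (∀ u ∈ insert v S, ∀ w ∈ insert v S, GZ.adj u w → GX.adj (G' u) (G' w)) ∧
      (∀ u ∈ insert v S, p (G' u) = H u) ∧ (∀ u ∈ S, G' u = G u) := by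
  classical
  have hunfold : IsUnfold (A := ↥S) (B := ↥(insert v S))
      ⟨fun a b => GZ.adj a.1 b.1, fun h => GZ.symm h⟩
      ⟨fun a b => GZ.adj a.1 b.1, fun h => GZ.symm h⟩
      (fun a => ⟨a.1, Set.mem_insert_of_mem _ a.2⟩) := by
    refine ⟨by rintro ⟨a, ha⟩ ⟨b, hb⟩ hab; simpa using hab,
      fun x y => Iff.rfl,
      ⟨v, Set.mem_insert _ _⟩, ?_, ?_, ⟨v', hv'⟩, fun b hb => hfold b.1 b.2 hb⟩
    · rintro ⟨a, ha⟩
      have hav : a.1 = v := congrArg Subtype.val ha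
      exact hv (hav ▸ a.2)
    · intro b hb
      rcases Set.mem_insert_iff.mp b.2 with hbv | hbS
      · exact Subtype.ext hbv
      · exact absurd ⟨⟨b.1, hbS⟩, Subtype.ext rfl⟩ hb
  obtain ⟨h, hhom, hi, hph⟩ :=
    hrlp (↥S) (↥(insert v S)) ⟨fun a b => GZ.adj a.1 b.1, fun h => GZ.symm h⟩
      ⟨fun a b => GZ.adj a.1 b.1, fun h => GZ.symm h⟩
      (fun a => ⟨a.1, Set.mem_insert_of_mem _ a.2⟩)
      hunfold
      (fun a => G a.1) (fun b => H b.1)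
      (fun a b hab => hG a.1 a.2 b.1 b.2 hab)
      (fun a b hab => hH a.1 a.2 b.1 b.2 hab)
      (fun a => hpG a.1 a.2)
  refine ⟨fun z => if hz : z ∈ insert v S then h ⟨z, hz⟩ else G z, ?_, ?_, ?_⟩
  · intro u hu w hw hadj
    simp only [dif_pos hu, dif_pos hw]
    exact hhom hadj
  · intro u hu
    simp only [dif_pos hu]
    exact hph ⟨u, hu⟩
  · intro u hu
    simp only [dif_pos (Set.mem_insert_of_mem v hu)]
    exact hi ⟨u, hu⟩

/-- Homotopy lifting from the RLP with respect to unfolds. -/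
lemma cyl_lift {X Y : Type} [Fintype Y] (GX : LoopGraph X) (GY : LoopGraph Y) (p : X → Y)
    (hrlp : RLPunfolds GX GY p) (n : ℕ) (g : Y → X) (hg : IsGraphHom GY GX g)
    (F : Y × Fin (n + 1) → Y) (hF : IsGraphHom (GY.prod (pathI n)) GY F)
    (hF0 : ∀ y, F (y, 0) = p (g y)) :
    ∃ G : Y × Fin (n + 1) → X,
      (∀ u w : Y × Fin (n + 1), (GY.prod (pathI n)).adj u w → GX.adj (G u) (G w)) ∧
      (∀ u, p (G u) = F u) := by
  classical
  have key : ∀ k, k ≤ n → ∃ G : Y × Fin (n + 1) → X,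
      (∀ u w : Y × Fin (n + 1), (u.2 : ℕ) ≤ k → (w.2 : ℕ) ≤ k →
        (GY.prod (pathI n)).adj u w → GX.adj (G u) (G w)) ∧
      (∀ u : Y × Fin (n + 1), (u.2 : ℕ) ≤ k → p (G u) = F u) := by
    intro k
    induction k with
    | zero =>
      intro _
      refine ⟨fun u => g u.1, fun u w _ _ h => hg h.1, fun u hu => ?_⟩
      have h2 : u.2 = 0 := Fin.ext (by simpa using Nat.le_zero.mp hu)
      have : u = (u.1, 0) := by rw [← h2]
      rw [this, hF0]
    | succ k ih =>
      intro hk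
      obtain ⟨G0, hG0, hpG0⟩ := ih (by omega)
      have inner : ∀ T : Finset Y, ∃ G : Y × Fin (n + 1) → X,
          (∀ u ∈ {u : Y × Fin (n + 1) | (u.2 : ℕ) ≤ k ∨ ((u.2 : ℕ) = k + 1 ∧ u.1 ∈ T)},
           ∀ w ∈ {u : Y × Fin (n + 1) | (u.2 : ℕ) ≤ k ∨ ((u.2 : ℕ) = k + 1 ∧ u.1 ∈ T)},
            (GY.prod (pathI n)).adj u w → GX.adj (G u) (G w)) ∧
          (∀ u ∈ {u : Y × Fin (n + 1) | (u.2 : ℕ) ≤ k ∨ ((u.2 : ℕ) = k + 1 ∧ u.1 ∈ T)},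
            p (G u) = F u) := by
        intro T
        induction T using Finset.induction with
        | empty =>
          refine ⟨G0, ?_, ?_⟩ <;>
            simp only [Finset.notMem_empty, and_false, or_false, Set.mem_setOf_eq]
          · exact fun u hu w hw => hG0 u w hu hw
          · exact fun u hu => hpG0 u hu
        | @insert y T hyT ihT =>
          obtain ⟨G1, hG1, hpG1⟩ := ihT
          have hk1 : k + 1 < n + 1 := by omega
          have hv : ((y, ⟨k + 1, hk1⟩) : Y × Fin (n + 1)) ∉
              {u : Y × Fin (n + 1) | (u.2 : ℕ) ≤ k ∨ ((u.2 : ℕ) = k + 1 ∧ u.1 ∈ T)} := by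
            rintro (h | ⟨-, h⟩)
            · simp at h
            · exact hyT h
          have hv' : ((y, ⟨k, by omega⟩) : Y × Fin (n + 1)) ∈
              {u : Y × Fin (n + 1) | (u.2 : ℕ) ≤ k ∨ ((u.2 : ℕ) = k + 1 ∧ u.1 ∈ T)} :=
            Or.inl (by simp)
          have hfold : ∀ b ∈ insert ((y, ⟨k + 1, hk1⟩) : Y × Fin (n + 1))
              {u : Y × Fin (n + 1) | (u.2 : ℕ) ≤ k ∨ ((u.2 : ℕ) = k + 1 ∧ u.1 ∈ T)},
              (GY.prod (pathI n)).adj (y, ⟨k + 1, hk1⟩) b →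
              (GY.prod (pathI n)).adj ((y, ⟨k, by omega⟩) : Y × Fin (n + 1)) b := by
            rintro b hb ⟨hadj1, hadj2, hadj3⟩
            refine ⟨hadj1, ?_, ?_⟩
            · simp only [Fin.val_mk] at hadj2 ⊢; omega
            · have hble : (b.2 : ℕ) ≤ k + 1 := by
                rcases hb with rfl | (h | ⟨h, -⟩)
                · simp
                · omega
                · omega
              simp only [Fin.val_mk]; omega
          obtain ⟨G2, hG2, hpG2, hG2eq⟩ := ext_step GX GY p hrlp (GY.prod (pathI n))
            {u : Y × Fin (n + 1) | (u.2 : ℕ) ≤ k ∨ ((u.2 : ℕ) = k + 1 ∧ u.1 ∈ T)}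
            (y, ⟨k + 1, hk1⟩) hv (y, ⟨k, by omega⟩) hv' hfold
            F (fun u _ w _ h => hF h) G1 hG1 hpG1
          have hset : insert ((y, ⟨k + 1, hk1⟩) : Y × Fin (n + 1))
                {u : Y × Fin (n + 1) | (u.2 : ℕ) ≤ k ∨ ((u.2 : ℕ) = k + 1 ∧ u.1 ∈ T)} =
                {u : Y × Fin (n + 1) | (u.2 : ℕ) ≤ k ∨
                  ((u.2 : ℕ) = k + 1 ∧ u.1 ∈ insert y T)} := by
              ext ⟨u1, u2⟩
              simp only [Set.mem_insert_iff, Set.mem_setOf_eq, Finset.mem_insert,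
                Prod.mk.injEq, Fin.ext_iff]
              constructor
              · rintro (⟨rfl, h2⟩ | h) <;> tauto
              · rintro (h | ⟨h1, rfl | h2⟩) <;> tauto
          rw [hset] at hG2 hpG2
          exact ⟨G2, hG2, hpG2⟩
      obtain ⟨G, hG, hpG⟩ := inner Finset.univ
      refine ⟨G, fun u w hu hw hadj => hG u ?_ w ?_ hadj, fun u hu => hpG u ?_⟩ <;>
        simp only [Set.mem_setOf_eq, Finset.mem_univ, and_true] <;> omega
  obtain ⟨G, hG, hpG⟩ := key n le_rfl
  exact ⟨G, fun u w h => hG u w u.2.is_le w.2.is_le h, fun u => hpG u u.2.is_le⟩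

/-- a ×-homotopy equivalence between finite connected graphs with the right
lifting property with respect to every unfold admits a section. -/
theorem stmt10 {X Y : Type} [Fintype X] [Fintype Y] (GX : LoopGraph X) (GY : LoopGraph Y)
    (hX : GX.Connected) (hY : GY.Connected)
    (p : X → Y) (hp : IsHtpyEquiv GX GY p) (hrlp : RLPunfolds GX GY p) :
    ∃ s : Y → X, IsGraphHom GY GX s ∧ ∀ y, p (s y) = y := by
  obtain ⟨hphom, g, hg, -, n, F, hF, hF0, hFn⟩ := hp
  obtain ⟨G, hG, hpG⟩ := cyl_lift GX GY p hrlp n g hg F hF (fun y => hF0 y)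
  refine ⟨fun y => G (y, Fin.last n), fun y y' h => hG _ _ ⟨h, Nat.le_succ _, Nat.le_succ _⟩,
    fun y => ?_⟩
  rw [hpG (y, Fin.last n)]
  exact hFn y
end

section
/- There is no model structure (W, C, F) on the category of finite graphs in which W is the class of ×-homotopy equivalences and C ∩ W (the class of acyclic cofibrations) is the class of all finite compositions of unfolds. -/
/-- The class of finite compositions of unfolds (incl. the empty composition, i.e. identities). -/
inductive CompUnfolds : ∀ (A B : FinGraph), (Fin A.n → Fin B.n) → Prop
  | id (A : FinGraph) : CompUnfolds A A (fun a => a)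
  | unfold {A B : FinGraph} {f : Fin A.n → Fin B.n} :
      IsUnfold A.G B.G f → CompUnfolds A B f
  | comp {A B D : FinGraph} {f : Fin A.n → Fin B.n} {g : Fin B.n → Fin D.n} :
      CompUnfolds A B f → CompUnfolds B D g → CompUnfolds A D (g ∘ f)

namespace Stmt12Aux

/-- Adjacency in the reflexive 5-cycle, on natural number codes. -/
def C5a (a b : ℕ) : Prop := (b + 5 - a) % 5 ≤ 1 ∨ (a + 5 - b) % 5 ≤ 1

instance (a b : ℕ) : Decidable (C5a a b) := by unfold C5a; infer_instance

/-- The reflexive 5-cycle. -/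
def C5 : LoopGraph (Fin 5) where
  adj x y := C5a x.1 y.1
  symm h := h.symm

/-- The square of the reflexive 5-cycle, encoded on `Fin 25`. -/
def G25 : LoopGraph (Fin 25) where
  adj x y := C5a (x.1 / 5) (y.1 / 5) ∧ C5a (x.1 % 5) (y.1 % 5)
  symm h := ⟨h.1.symm, h.2.symm⟩

def X5 : FinGraph := ⟨5, C5⟩
def X25 : FinGraph := ⟨25, G25⟩

/-- The diagonal map `C5 → C5 × C5`. -/
def dmap : Fin 5 → Fin 25 := fun x => ⟨5 * x.1 + x.1, by omega⟩

lemma hdmap : IsGraphHom C5 G25 dmap := by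
  intro x y h
  constructor
  · show C5a ((5 * x.1 + x.1) / 5) ((5 * y.1 + y.1) / 5)
    have e1 : (5 * x.1 + x.1) / 5 = x.1 := by omega
    have e2 : (5 * y.1 + y.1) / 5 = y.1 := by omega
    rw [e1, e2]; exact h
  · show C5a ((5 * x.1 + x.1) % 5) ((5 * y.1 + y.1) % 5)
    have e1 : (5 * x.1 + x.1) % 5 = x.1 := by omega
    have e2 : (5 * y.1 + y.1) % 5 = y.1 := by omega
    rw [e1, e2]; exact h

/-- Signed step (winding increment) between adjacent vertices of the 5-cycle. -/
def dd (x y : Fin 5) : ℤ :=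
  if (y.1 + 5 - x.1) % 5 = 1 then 1 else if (x.1 + 5 - y.1) % 5 = 1 then -1 else 0

lemma dd_key : ∀ x x' y y' : Fin 5, C5a x.1 x'.1 → C5a y.1 y'.1 → C5a x.1 y.1 → C5a x'.1 y'.1 →
    dd y y' - dd x x' = dd x' y' - dd x y := by decide

lemma dd_abs : ∀ x y : Fin 5, |dd x y| ≤ 1 := by decide

/-- Total winding of a map out of the (clamped) path of length `n`. -/
def Ssum (n : ℕ) (u : ℕ → Fin 5) : ℤ := ∑ i ∈ Finset.range n, dd (u i) (u (i + 1))

lemma Ssum_congr (n : ℕ) (u v : ℕ → Fin 5) (h : ∀ i, u i = v i) : Ssum n u = Ssum n v := by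
  unfold Ssum
  exact Finset.sum_congr rfl fun i _ => by rw [h i, h (i + 1)]

lemma key_step {n : ℕ} (u v : ℕ → Fin 5)
    (hu : ∀ i, i < n → C5a (u i).1 (u (i + 1)).1)
    (hv : ∀ i, i < n → C5a (v i).1 (v (i + 1)).1)
    (huv : ∀ i, i ≤ n → C5a (u i).1 (v i).1) :
    |Ssum n v - Ssum n u| ≤ 2 := by
  have h2 : ∀ i ∈ Finset.range n,
      dd (v i) (v (i + 1)) - dd (u i) (u (i + 1))
        = dd (u (i + 1)) (v (i + 1)) - dd (u i) (v i) := by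
    intro i hi
    have hi' := Finset.mem_range.mp hi
    exact dd_key (u i) (u (i + 1)) (v i) (v (i + 1)) (hu i hi') (hv i hi')
      (huv i (le_of_lt hi')) (huv (i + 1) hi')
  have hmain : Ssum n v - Ssum n u = dd (u n) (v n) - dd (u 0) (v 0) := by
    unfold Ssum
    rw [← Finset.sum_sub_distrib, Finset.sum_congr rfl h2,
      Finset.sum_range_sub (f := fun i => dd (u i) (v i))]
  rw [hmain]
  have a1 := dd_abs (u n) (v n)
  have a2 := dd_abs (u 0) (v 0)
  have h3 : |dd (u n) (v n) - dd (u 0) (v 0)| ≤ |dd (u n) (v n)| + |dd (u 0) (v 0)| := by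
    calc |dd (u n) (v n) - dd (u 0) (v 0)| = |dd (u n) (v n) + -(dd (u 0) (v 0))| := by
          rw [sub_eq_add_neg]
      _ ≤ |dd (u n) (v n)| + |-(dd (u 0) (v 0))| := abs_add_le _ _
      _ = |dd (u n) (v n)| + |dd (u 0) (v 0)| := by rw [abs_neg]
  linarith

def clamp (n i : ℕ) : Fin (n + 1) := ⟨min i n, by omega⟩

lemma homotopy_Sbound {n k : ℕ} (F : Fin (n + 1) × Fin (k + 1) → Fin 5)
    (hF : IsGraphHom ((pathI n).prod (pathI k)) C5 F) :
    |Ssum n (fun i => F (clamp n i, Fin.last k)) - Ssum n (fun i => F (clamp n i, 0))| ≤ 2 * k := by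
  have step : ∀ t, t < k →
      |Ssum n (fun i => F (clamp n i, clamp k (t + 1))) -
        Ssum n (fun i => F (clamp n i, clamp k t))| ≤ 2 := by
    intro t ht
    apply key_step
    · intro i hi
      refine hF ⟨⟨?_, ?_⟩, ⟨?_, ?_⟩⟩
      · show min i n ≤ min (i + 1) n + 1; omega
      · show min (i + 1) n ≤ min i n + 1; omega
      · show min t k ≤ min t k + 1; omega
      · show min t k ≤ min t k + 1; omega
    · intro i hi
      refine hF ⟨⟨?_, ?_⟩, ⟨?_, ?_⟩⟩
      · show min i n ≤ min (i + 1) n + 1; omega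
      · show min (i + 1) n ≤ min i n + 1; omega
      · show min (t + 1) k ≤ min (t + 1) k + 1; omega
      · show min (t + 1) k ≤ min (t + 1) k + 1; omega
    · intro i hi
      refine hF ⟨⟨?_, ?_⟩, ⟨?_, ?_⟩⟩
      · show min i n ≤ min i n + 1; omega
      · show min i n ≤ min i n + 1; omega
      · show min t k ≤ min (t + 1) k + 1; omega
      · show min (t + 1) k ≤ min t k + 1; omega
  have bound : |Ssum n (fun i => F (clamp n i, clamp k k)) -
      Ssum n (fun i => F (clamp n i, clamp k 0))| ≤ 2 * k := by
    have tele := Finset.sum_range_sub (f := fun t => Ssum n (fun i => F (clamp n i, clamp k t))) k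
    rw [← tele]
    calc |∑ t ∈ Finset.range k, (Ssum n (fun i => F (clamp n i, clamp k (t + 1))) -
            Ssum n (fun i => F (clamp n i, clamp k t)))|
        ≤ ∑ t ∈ Finset.range k, |Ssum n (fun i => F (clamp n i, clamp k (t + 1))) -
            Ssum n (fun i => F (clamp n i, clamp k t))| := Finset.abs_sum_le_sum_abs _ _
      _ ≤ ∑ _t ∈ Finset.range k, (2 : ℤ) :=
          Finset.sum_le_sum (fun t ht => step t (Finset.mem_range.mp ht))
      _ = 2 * k := by simp [mul_comm]
  have el : clamp k k = Fin.last k := by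
    apply Fin.ext; show min k k = k; omega
  have e0 : clamp k 0 = (0 : Fin (k + 1)) := by
    apply Fin.ext; show min 0 k = (0 : Fin (k+1)).1; simp
  rw [← el, ← e0]
  exact bound

/-- `natAdj a b` iff `|a-b| ≤ 1`. -/
def natAdj (a b : ℕ) : Prop := a ≤ b + 1 ∧ b ≤ a + 1

/-- The cylinder graph `pathI n × I` truncated to its first `j` vertices, a vertex
`t*(n+1)+a` encoding the pair `(a,t)`. -/
def cylG (n j : ℕ) : LoopGraph (Fin j) where
  adj x y := natAdj (x.1 % (n + 1)) (y.1 % (n + 1)) ∧ natAdj (x.1 / (n + 1)) (y.1 / (n + 1))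
  symm h := ⟨⟨h.1.2, h.1.1⟩, ⟨h.2.2, h.2.1⟩⟩

def cylFG (n j : ℕ) : FinGraph := ⟨j, cylG n j⟩

lemma unfold_step (n j : ℕ) (hj : n + 1 ≤ j) :
    IsUnfold (cylG n j) (cylG n (j + 1)) Fin.castSucc := by
  obtain ⟨m, rfl⟩ : ∃ m, j = (n + 1) + m := ⟨j - (n + 1), by omega⟩
  refine ⟨Fin.castSucc_injective _, fun x y => Iff.rfl, Fin.last _, ?_, ?_,
    ⟨⟨m, by omega⟩, ?_⟩⟩
  · rintro ⟨a, ha⟩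
    have h1 := congrArg Fin.val ha
    simp only [Fin.coe_castSucc, Fin.val_last] at h1
    have := a.isLt
    omega
  · intro b hb
    apply Fin.ext
    show b.1 = (n + 1) + m
    by_contra hne
    exact hb ⟨⟨b.1, by have := b.isLt; omega⟩, Fin.ext rfl⟩
  · intro b hb
    obtain ⟨h1, h2⟩ := hb
    simp only [Fin.val_last] at h1 h2
    have emod : ((n + 1) + m) % (n + 1) = m % (n + 1) := Nat.add_mod_left _ _
    have ediv : ((n + 1) + m) / (n + 1) = m / (n + 1) + 1 := by
      rw [Nat.add_div_left _ (by omega)]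
    rw [emod] at h1
    rw [ediv] at h2
    constructor
    · show natAdj ((Fin.castSucc (⟨m, by omega⟩ : Fin ((n+1)+m))).1 % (n + 1)) (b.1 % (n + 1))
      simpa using h1
    · show natAdj ((Fin.castSucc (⟨m, by omega⟩ : Fin ((n+1)+m))).1 / (n + 1)) (b.1 / (n + 1))
      have e2 : b.1 / (n + 1) ≤ m / (n + 1) + 1 := by
        calc b.1 / (n + 1) ≤ ((n + 1) + m) / (n + 1) :=
              Nat.div_le_div_right (by have := b.isLt; omega)
          _ = m / (n + 1) + 1 := ediv
      obtain ⟨h2a, h2b⟩ := h2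
      refine ⟨?_, ?_⟩
      · show m / (n + 1) ≤ b.1 / (n + 1) + 1
        have : m / (n + 1) ≤ b.1 / (n + 1) := Nat.le_of_succ_le_succ h2a
        exact le_trans this (Nat.le_succ _)
      · exact e2

lemma cyl_compU (n : ℕ) : ∀ j, (hj : n + 1 ≤ j) →
    CompUnfolds (cylFG n (n + 1)) (cylFG n j) (fun a => ⟨a.1, lt_of_lt_of_le a.isLt hj⟩) := by
  intro j hj
  induction j, hj using Nat.le_induction with
  | base => exact CompUnfolds.id (cylFG n (n + 1))
  | succ j hj ih =>
      exact CompUnfolds.comp (B := cylFG n j) ih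
        (CompUnfolds.unfold (A := cylFG n j) (B := cylFG n (j + 1)) (unfold_step n j hj))

lemma c5_min_div (a t a' t' : ℕ) : C5a (min a t % 5 / 5) (min a' t' % 5 / 5) := by
  have h1 : min a t % 5 / 5 = 0 := by omega
  have h2 : min a' t' % 5 / 5 = 0 := by omega
  rw [h1, h2]; left; norm_num

lemma c5_min_mod (a t a' t' : ℕ) (h1 : natAdj a a') (h2 : natAdj t t') :
    C5a (min a t % 5 % 5) (min a' t' % 5 % 5) := by
  unfold natAdj at h1 h2
  unfold C5a
  omega

end Stmt12Aux

namespace Stmt12Aux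
def z0 : Fin 5 := ⟨0, by omega⟩
lemma z0adj : C5a z0.1 z0.1 := by decide
lemma z0val : z0.1 = 0 := rfl
lemma ddz0 : dd z0 z0 = 0 := by decide
end Stmt12Aux

/-- there is no model structure on the category of finite graphs whose weak
equivalences are the ×-homotopy equivalences and whose acyclic cofibrations (`C ∩ W`) are
exactly the finite compositions of unfolds. -/
theorem stmt12 :
    ¬ ∃ (Cof Fib : MorClass), ModelStructure Whe Cof Fib ∧
      ∀ (A B : FinGraph) (f : Fin A.n → Fin B.n),
        (Cof A B f ∧ Whe A B f) ↔ CompUnfolds A B f := by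
  rintro ⟨Cof, Fib, ms, hiff⟩
  classical
  -- factor the diagonal of the reflexive 5-cycle
  obtain ⟨P, s, p, hsC, hsW, hpF, hps⟩ :=
    ms.fact_cw_f Stmt12Aux.X5 Stmt12Aux.X25 Stmt12Aux.dmap Stmt12Aux.hdmap
  obtain ⟨hshom, s', hs'hom, -, k, F₂, hF₂, hF₂0, hF₂1⟩ := hsW
  set n : ℕ := 4 * k + 1 with hn
  set J : ℕ := (n + 1) * (n + 2) with hJdef
  have hJ : n + 1 ≤ J := by
    have h1 : (n + 1) * 1 ≤ (n + 1) * (n + 2) := Nat.mul_le_mul_left _ (by omega)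
    rw [Nat.mul_one] at h1
    exact h1
  have compU := Stmt12Aux.cyl_compU n J hJ
  obtain ⟨hCof, hW⟩ := (hiff _ _ _).mpr compU
  have php : IsGraphHom P.G Stmt12Aux.G25 p := ms.f_hom _ _ p hpF
  -- the lifting square
  set topf : Fin ((Stmt12Aux.cylFG n (n + 1)).n) → Fin P.n := fun _ => s Stmt12Aux.z0 with htopf
  set botf : Fin ((Stmt12Aux.cylFG n J).n) → Fin 25 :=
    fun x => ⟨min (x.1 % (n + 1)) (x.1 / (n + 1)) % 5,
      lt_of_lt_of_le (Nat.mod_lt _ (by norm_num)) (by norm_num)⟩ with hbotf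
  have htop : IsGraphHom (Stmt12Aux.cylFG n (n + 1)).G P.G topf := by
    intro x y hxy
    exact hshom Stmt12Aux.z0adj
  have hbot : IsGraphHom (Stmt12Aux.cylFG n J).G Stmt12Aux.G25 botf := by
    intro x y hxy
    obtain ⟨h1, h2⟩ := hxy
    constructor
    · exact Stmt12Aux.c5_min_div _ _ _ _
    · exact Stmt12Aux.c5_min_mod _ _ _ _ h1 h2
  have hcomm : ∀ a, p (topf a) =
      botf (⟨a.1, lt_of_lt_of_le a.isLt hJ⟩ : Fin ((Stmt12Aux.cylFG n J).n)) := by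
    intro a
    have e1 : topf a = s Stmt12Aux.z0 := rfl
    rw [e1, hps Stmt12Aux.z0]
    apply Fin.ext
    show 5 * Stmt12Aux.z0.1 + Stmt12Aux.z0.1 = min (a.1 % (n + 1)) (a.1 / (n + 1)) % 5
    have h1 : a.1 % (n + 1) = a.1 := Nat.mod_eq_of_lt a.isLt
    have h2 : a.1 / (n + 1) = 0 := Nat.div_eq_of_lt a.isLt
    rw [h1, h2, Stmt12Aux.z0val]
    simp
  obtain ⟨h, hhom, -, hph⟩ :=
    ms.lift_cw_f _ _ _ _ _ p hCof hW hpF topf botf htop hbot hcomm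
  -- the lifted path
  set encC : Fin (n + 1) → Fin ((Stmt12Aux.cylFG n J).n) := fun a =>
    ⟨(n + 1) * n + a.1, by
      have h1 : (n + 1) * n + a.1 < (n + 1) * n + (n + 1) := Nat.add_lt_add_left a.isLt _
      have h2 : (n + 1) * n + (n + 1) = (n + 1) * (n + 1) := by ring
      have h3 : (n + 1) * (n + 1) ≤ (n + 1) * (n + 2) := Nat.mul_le_mul_left _ (by omega)
      exact lt_of_lt_of_le (h2 ▸ h1) h3⟩ with hencC
  have hK : IsGraphHom (pathI n) P.G (fun a => h (encC a)) := by
    intro a b hab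
    apply hhom
    constructor
    · show Stmt12Aux.natAdj (((n + 1) * n + a.1) % (n + 1)) (((n + 1) * n + b.1) % (n + 1))
      rw [Nat.mul_add_mod, Nat.mul_add_mod, Nat.mod_eq_of_lt a.isLt, Nat.mod_eq_of_lt b.isLt]
      exact hab
    · show Stmt12Aux.natAdj (((n + 1) * n + a.1) / (n + 1)) (((n + 1) * n + b.1) / (n + 1))
      rw [Nat.mul_add_div (by omega), Nat.mul_add_div (by omega),
        Nat.div_eq_of_lt a.isLt, Nat.div_eq_of_lt b.isLt]
      exact ⟨by omega, by omega⟩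
  have hpK : ∀ a : Fin (n + 1), p (h (encC a)) = ⟨a.1 % 5, by show a.1 % 5 < 25; omega⟩ := by
    intro a
    rw [hph (encC a)]
    apply Fin.ext
    show min (((n + 1) * n + a.1) % (n + 1)) (((n + 1) * n + a.1) / (n + 1)) % 5 = a.1 % 5
    rw [Nat.mul_add_mod, Nat.mod_eq_of_lt a.isLt, Nat.mul_add_div (by omega),
      Nat.div_eq_of_lt a.isLt]
    have e : min a.1 (n + 0) = a.1 := by have := a.isLt; omega
    rw [e]
  -- the two projections
  set p₀ : Fin P.n → Fin 5 := fun z => ⟨(p z).1 / 5, by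
    have h25 : (p z).1 < 25 := (p z).isLt
    omega⟩ with hp₀
  set p₁ : Fin P.n → Fin 5 := fun z => ⟨(p z).1 % 5, by omega⟩ with hp₁
  have hp₀hom : IsGraphHom P.G Stmt12Aux.C5 p₀ := by
    intro x y hxy; exact (php hxy).1
  have hp₁hom : IsGraphHom P.G Stmt12Aux.C5 p₁ := by
    intro x y hxy; exact (php hxy).2
  have hp₀s : ∀ x, p₀ (s x) = x := by
    intro x
    apply Fin.ext
    show (p (s x)).1 / 5 = x.1
    rw [hps x]
    show (5 * x.1 + x.1) / 5 = x.1
    have h5 : x.1 < 5 := x.isLt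
    omega
  have hp₁s : ∀ x, p₁ (s x) = x := by
    intro x
    apply Fin.ext
    show (p (s x)).1 % 5 = x.1
    rw [hps x]
    show (5 * x.1 + x.1) % 5 = x.1
    have h5 : x.1 < 5 := x.isLt
    omega
  have hp₀K : ∀ a : Fin (n + 1), p₀ (h (encC a)) = Stmt12Aux.z0 := by
    intro a
    apply Fin.ext
    show (p (h (encC a))).1 / 5 = Stmt12Aux.z0.1
    rw [hpK a, Stmt12Aux.z0val]
    show a.1 % 5 / 5 = 0
    omega
  have hp₁K : ∀ a : Fin (n + 1), p₁ (h (encC a)) = ⟨a.1 % 5, by omega⟩ := by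
    intro a
    apply Fin.ext
    show (p (h (encC a))).1 % 5 = a.1 % 5
    rw [hpK a]
    show a.1 % 5 % 5 = a.1 % 5
    omega
  -- the two induced homotopies of maps into the 5-cycle
  set G0f : Fin (n + 1) × Fin (k + 1) → Fin 5 := fun q => p₀ (F₂ (h (encC q.1), q.2)) with hG0def
  set G1f : Fin (n + 1) × Fin (k + 1) → Fin 5 := fun q => p₁ (F₂ (h (encC q.1), q.2)) with hG1def
  have hG0hom : IsGraphHom ((pathI n).prod (pathI k)) Stmt12Aux.C5 G0f := by
    intro x y hxy
    exact hp₀hom (hF₂ ⟨hK hxy.1, hxy.2⟩)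
  have hG1hom : IsGraphHom ((pathI n).prod (pathI k)) Stmt12Aux.C5 G1f := by
    intro x y hxy
    exact hp₁hom (hF₂ ⟨hK hxy.1, hxy.2⟩)
  have B0 := Stmt12Aux.homotopy_Sbound G0f hG0hom
  have B1 := Stmt12Aux.homotopy_Sbound G1f hG1hom
  -- identify the endpoints
  have E0l : ∀ i : ℕ, G0f (Stmt12Aux.clamp n i, Fin.last k) = Stmt12Aux.z0 := by
    intro i
    show p₀ (F₂ (h (encC (Stmt12Aux.clamp n i)), Fin.last k)) = Stmt12Aux.z0
    rw [hF₂1]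
    exact hp₀K _
  have E00 : ∀ i : ℕ, G0f (Stmt12Aux.clamp n i, 0) = s' (h (encC (Stmt12Aux.clamp n i))) := by
    intro i
    show p₀ (F₂ (h (encC (Stmt12Aux.clamp n i)), 0)) = s' (h (encC (Stmt12Aux.clamp n i)))
    rw [hF₂0]
    exact hp₀s _
  have E1l : ∀ i : ℕ, G1f (Stmt12Aux.clamp n i, Fin.last k)
      = ⟨(Stmt12Aux.clamp n i).1 % 5, by omega⟩ := by
    intro i
    show p₁ (F₂ (h (encC (Stmt12Aux.clamp n i)), Fin.last k)) = _
    rw [hF₂1]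
    exact hp₁K _
  have E10 : ∀ i : ℕ, G1f (Stmt12Aux.clamp n i, 0) = s' (h (encC (Stmt12Aux.clamp n i))) := by
    intro i
    show p₁ (F₂ (h (encC (Stmt12Aux.clamp n i)), 0)) = s' (h (encC (Stmt12Aux.clamp n i)))
    rw [hF₂0]
    exact hp₁s _
  -- compute the winding numbers
  have Sconst : Stmt12Aux.Ssum n (fun i => G0f (Stmt12Aux.clamp n i, Fin.last k)) = 0 := by
    rw [Stmt12Aux.Ssum_congr n _ (fun _ => Stmt12Aux.z0) E0l]
    unfold Stmt12Aux.Ssum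
    apply Finset.sum_eq_zero
    intro i _
    exact Stmt12Aux.ddz0
  have Sg : Stmt12Aux.Ssum n (fun i => G1f (Stmt12Aux.clamp n i, Fin.last k)) = n := by
    rw [Stmt12Aux.Ssum_congr n _
      (fun i => (⟨(Stmt12Aux.clamp n i).1 % 5, by omega⟩ : Fin 5)) E1l]
    unfold Stmt12Aux.Ssum
    have hterm : ∀ i ∈ Finset.range n,
        Stmt12Aux.dd ⟨(Stmt12Aux.clamp n i).1 % 5, by omega⟩
          ⟨(Stmt12Aux.clamp n (i + 1)).1 % 5, by omega⟩ = 1 := by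
      intro i hi
      have hi' := Finset.mem_range.mp hi
      have e1 : (Stmt12Aux.clamp n i).1 = i := by show min i n = i; omega
      have e2 : (Stmt12Aux.clamp n (i + 1)).1 = i + 1 := by show min (i + 1) n = i + 1; omega
      unfold Stmt12Aux.dd
      rw [if_pos]
      show ((Stmt12Aux.clamp n (i + 1)).1 % 5 + 5 - (Stmt12Aux.clamp n i).1 % 5) % 5 = 1
      rw [e1, e2]
      omega
    rw [Finset.sum_congr rfl hterm]
    simp
  -- the common middle map
  have hmid : (fun i => G0f (Stmt12Aux.clamp n i, 0)) = (fun i => G1f (Stmt12Aux.clamp n i, 0)) := by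
    funext i
    rw [E00 i, E10 i]
  rw [Sconst] at B0
  rw [Sg] at B1
  rw [Stmt12Aux.Ssum_congr n (fun i => G0f (Stmt12Aux.clamp n i, 0))
    (fun i => G1f (Stmt12Aux.clamp n i, 0)) (fun i => congrFun hmid i)] at B0
  -- conclude
  obtain ⟨b0a, b0b⟩ := abs_le.mp B0
  obtain ⟨b1a, b1b⟩ := abs_le.mp B1
  have : (n : ℤ) ≤ 4 * k := by linarith
  rw [hn] at this
  push_cast at this
  linarith
end
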